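/- arXiv:1106.5467 — 7 statements merged into one kernel-verified Lean document; each statement's English description precedes it below -/
import Mathlib

section
/- For n ≥ 2, if X is a nonzero real symmetric n×n matrix of trace zero, then the linear span of the set {U X Uᵀ : U ∈ SO(n)} equals the space of all real symmetric n×n matrices of trace zero. -/
open Matrix

variable {n : ℕ}

lemma myso_star_eq (A : Matrix (Fin n) (Fin n) ℝ) : star A = Aᵀ := by
  ext k l; simp [Matrix.star_apply]

lemma myso_orth_iff (A : Matrix (Fin n) (Fin n) ℝ) :
    A ∈ Matrix.orthogonalGroup (Fin n) ℝ ↔ A * Aᵀ = 1 := by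
  rw [Matrix.mem_orthogonalGroup_iff]

lemma myso_orth_transpose {A : Matrix (Fin n) (Fin n) ℝ}
    (hA : A ∈ Matrix.orthogonalGroup (Fin n) ℝ) : Aᵀ ∈ Matrix.orthogonalGroup (Fin n) ℝ := by
  rw [myso_orth_iff] at hA ⊢
  rw [transpose_transpose]
  exact mul_eq_one_comm.mp hA

lemma myso_so_mul {A B : Matrix (Fin n) (Fin n) ℝ}
    (hA : A ∈ Matrix.specialOrthogonalGroup (Fin n) ℝ)
    (hB : B ∈ Matrix.specialOrthogonalGroup (Fin n) ℝ) :
    A * B ∈ Matrix.specialOrthogonalGroup (Fin n) ℝ := by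
  rw [Matrix.mem_specialOrthogonalGroup_iff] at *
  refine ⟨?_, by rw [Matrix.det_mul, hA.2, hB.2, one_mul]⟩
  rw [myso_orth_iff] at *
  simp only [transpose_mul, Matrix.mul_assoc]
  rw [← Matrix.mul_assoc B, hB.1, Matrix.one_mul, hA.1]

lemma myso_so_transpose {A : Matrix (Fin n) (Fin n) ℝ}
    (hA : A ∈ Matrix.specialOrthogonalGroup (Fin n) ℝ) :
    Aᵀ ∈ Matrix.specialOrthogonalGroup (Fin n) ℝ := by
  rw [Matrix.mem_specialOrthogonalGroup_iff] at *
  exact ⟨myso_orth_transpose hA.1, by rw [Matrix.det_transpose, hA.2]⟩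

lemma myso_sum_pair {i j : Fin n} (hij : i ≠ j) (F : Fin n → ℝ)
    (h : ∀ m, m ≠ i → m ≠ j → F m = 0) : ∑ m, F m = F i + F j := by
  have e1 : ∀ m, F m = (if m = i then F i else 0) + (if m = j then F j else 0) := by
    intro m
    by_cases h1 : m = i
    · subst h1; simp [hij]
    · by_cases h2 : m = j
      · subst h2; simp [h1]
      · simp [h1, h2, h m h1 h2]
  rw [Finset.sum_congr rfl (fun m _ => e1 m)]
  simp [Finset.sum_add_distrib]

/-- Givens rotation matrix. -/
def myGivens (i j : Fin n) (a b : ℝ) : Matrix (Fin n) (Fin n) ℝ :=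
  Matrix.of fun k l =>
    if k = i then (if l = i then a else if l = j then b else 0)
    else if k = j then (if l = i then -b else if l = j then a else 0)
    else if k = l then 1 else 0

lemma myGivens_apply (i j : Fin n) (a b : ℝ) (k l : Fin n) :
    myGivens i j a b k l =
      (if k = i then (if l = i then a else if l = j then b else 0)
      else if k = j then (if l = i then -b else if l = j then a else 0)
      else if k = l then 1 else 0) := rfl

lemma myGivens_offsupport {i j : Fin n} (a b : ℝ) {k l : Fin n}
    (hk : k ≠ i) (hk2 : k ≠ j) (hkl : k ≠ l) : myGivens i j a b k l = 0 := by
  simp [myGivens_apply, hk, hk2, hkl]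

lemma myGivens_transpose (i j : Fin n) (hij : i ≠ j) (a b : ℝ) :
    (myGivens i j a b)ᵀ = myGivens i j a (-b) := by
  ext k l
  simp only [transpose_apply, myGivens_apply]
  by_cases h1 : k = i <;> by_cases h2 : k = j <;> by_cases h3 : l = i <;> by_cases h4 : l = j <;>
    simp_all [eq_comm]

lemma myGivens_mul (i j : Fin n) (hij : i ≠ j) (a b c d : ℝ) :
    myGivens i j a b * myGivens i j c d = myGivens i j (a*c - b*d) (a*d + b*c) := by
  ext k l
  rw [Matrix.mul_apply]
  by_cases hk : k = i
  · subst hk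
    rw [myso_sum_pair hij _ (fun m hm1 hm2 => by
      simp [myGivens_apply, hm1, hm2, hij])]
    simp only [myGivens_apply, if_pos rfl, if_neg hij, if_neg (Ne.symm hij)]
    split_ifs <;> ring
  · by_cases hk2 : k = j
    · subst hk2
      rw [myso_sum_pair hij _ (fun m hm1 hm2 => by
        simp [myGivens_apply, hm1, hm2, hk])]
      simp only [myGivens_apply, if_pos rfl, if_neg hij, if_neg (Ne.symm hij), if_neg hk]
      split_ifs <;> ring
    · have : ∀ m, myGivens i j a b k m * myGivens i j c d m l
          = if m = k then myGivens i j c d m l else 0 := by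
        intro m
        by_cases hm : m = k
        · subst hm; simp [myGivens_apply, hk, hk2]
        · rw [myGivens_offsupport a b hk hk2 (Ne.symm hm), zero_mul, if_neg hm]
      rw [Finset.sum_congr rfl (fun m _ => this m)]
      simp [myGivens_apply, hk, hk2]

lemma myGivens_one (i j : Fin n) (hij : i ≠ j) : myGivens i j 1 0 = 1 := by
  ext k l
  rw [myGivens_apply, Matrix.one_apply]
  by_cases h1 : k = i <;> by_cases h2 : k = j <;> by_cases h3 : l = i <;> by_cases h4 : l = j <;>
    simp_all [eq_comm]

lemma myGivens_orth (i j : Fin n) (hij : i ≠ j) (a b : ℝ) (hab : a * a + b * b = 1) :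
    myGivens i j a b ∈ Matrix.orthogonalGroup (Fin n) ℝ := by
  rw [myso_orth_iff, myGivens_transpose i j hij, myGivens_mul i j hij]
  rw [show a * a - b * -b = 1 by linarith, show a * -b + b * a = 0 by ring]
  exact myGivens_one i j hij

lemma myGivens_conj (i j : Fin n) (hij : i ≠ j) (a : ℝ) (ha : a * a = 1/2) :
    myGivens i j a a * diagonal (Pi.single i (1:ℝ) - Pi.single j 1) * (myGivens i j a a)ᵀ
      = -(Matrix.single i j (1:ℝ) + Matrix.single j i 1) := by
  set e : Fin n → ℝ := Pi.single i (1:ℝ) - Pi.single j 1 with he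
  have he0 : ∀ m, m ≠ i → m ≠ j → e m = 0 := by
    intro m h1 h2; simp [he, Pi.single_apply, h1, h2]
  have hei : e i = 1 := by simp [he, Pi.single_apply, hij]
  have hej : e j = -1 := by simp [he, Pi.single_apply, Ne.symm hij]
  ext k l
  rw [Matrix.mul_apply]
  have hcol : ∀ m, (myGivens i j a a * diagonal e) k m = myGivens i j a a k m * e m := by
    intro m; rw [Matrix.mul_diagonal]
  rw [Finset.sum_congr rfl (fun m _ => by rw [hcol m, transpose_apply])]
  rw [myso_sum_pair hij _ (fun m hm1 hm2 => by rw [he0 m hm1 hm2]; ring)]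
  rw [hei, hej]
  clear he0 hei hej
  simp only [myGivens_apply, Matrix.single, Matrix.neg_apply, Matrix.add_apply, of_apply]
  by_cases h1 : k = i <;> by_cases h2 : k = j <;> by_cases h3 : l = i <;> by_cases h4 : l = j <;>
    simp_all [eq_comm] <;> linarith

lemma myPerm_apply (σ : Equiv.Perm (Fin n)) (k l : Fin n) :
    σ.permMatrix ℝ k l = if l = σ k then 1 else 0 := by
  simp only [Equiv.Perm.permMatrix, PEquiv.toMatrix_apply, Equiv.toPEquiv_apply, Option.mem_def,
    Option.some.injEq]
  by_cases h : l = σ k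
  · simp [h]
  · rw [if_neg (fun hc => h hc.symm), if_neg h]

lemma myPerm_conj (σ : Equiv.Perm (Fin n)) (e : Fin n → ℝ) :
    σ.permMatrix ℝ * diagonal e * (σ.permMatrix ℝ)ᵀ = diagonal (fun k => e (σ k)) := by
  ext k l
  rw [Matrix.mul_apply]
  have : ∀ m, (σ.permMatrix ℝ * diagonal e) k m * (σ.permMatrix ℝ)ᵀ m l
      = if m = σ k then (if m = σ l then e m else 0) else 0 := by
    intro m
    rw [Matrix.mul_diagonal, transpose_apply, myPerm_apply, myPerm_apply]
    split_ifs <;> simp_all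
  rw [Finset.sum_congr rfl (fun m _ => this m)]
  rw [Finset.sum_ite_eq' Finset.univ (σ k)]
  simp only [Finset.mem_univ, if_pos]
  by_cases h : k = l
  · subst h; simp [diagonal_apply]
  · rw [if_neg (fun hc => h (σ.injective hc)), diagonal_apply_ne _ h]

lemma myPerm_orth (σ : Equiv.Perm (Fin n)) :
    σ.permMatrix ℝ ∈ Matrix.orthogonalGroup (Fin n) ℝ := by
  rw [myso_orth_iff]
  have := myPerm_conj σ (fun _ => (1:ℝ))
  simpa [Matrix.diagonal_one] using this

lemma myso_fixup (hn : 0 < n) {A : Matrix (Fin n) (Fin n) ℝ}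
    (hA : A ∈ Matrix.orthogonalGroup (Fin n) ℝ) :
    ∃ V ∈ Matrix.specialOrthogonalGroup (Fin n) ℝ,
      ∀ e : Fin n → ℝ, V * diagonal e * Vᵀ = A * diagonal e * Aᵀ := by
  have hAA : A * Aᵀ = 1 := (myso_orth_iff A).mp hA
  have hdet2 : A.det * A.det = 1 := by
    have := congrArg Matrix.det hAA
    rwa [Matrix.det_mul, Matrix.det_transpose, Matrix.det_one] at this
  set i0 : Fin n := ⟨0, hn⟩ with hi0
  set f : Fin n → ℝ := fun k => if k = i0 then A.det else 1 with hf
  have hff : ∀ k, f k * f k = 1 := by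
    intro k; by_cases h : k = i0 <;> simp [hf, h, hdet2]
  have hFF : diagonal f * diagonal f = 1 := by
    rw [diagonal_mul_diagonal]
    ext k l
    rcases eq_or_ne k l with rfl | h
    · simp [hff k]
    · rw [diagonal_apply_ne _ h, Matrix.one_apply_ne h]
  have hdetF : (diagonal f).det = A.det := by
    rw [Matrix.det_diagonal, hf]
    simp [Finset.prod_ite_eq']
  refine ⟨A * diagonal f, ?_, ?_⟩
  · rw [Matrix.mem_specialOrthogonalGroup_iff]
    constructor
    · rw [myso_orth_iff, transpose_mul, diagonal_transpose, Matrix.mul_assoc,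
        ← Matrix.mul_assoc (diagonal f), hFF, Matrix.one_mul, hAA]
    · rw [Matrix.det_mul, hdetF, hdet2]
  · intro e
    have hcomm : diagonal f * diagonal e * diagonal f = diagonal e := by
      rw [diagonal_mul_diagonal, diagonal_mul_diagonal]
      ext k l
      rcases eq_or_ne k l with rfl | h
      · rw [diagonal_apply_eq, diagonal_apply_eq]
        linear_combination e k * hff k
      · rw [diagonal_apply_ne _ h, diagonal_apply_ne _ h]
    rw [transpose_mul, diagonal_transpose]
    calc A * diagonal f * diagonal e * (diagonal f * Aᵀ)
        = A * (diagonal f * diagonal e * diagonal f) * Aᵀ := by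
          simp only [Matrix.mul_assoc]
      _ = A * diagonal e * Aᵀ := by rw [hcomm]

lemma myso_vec_span (hn : 2 ≤ n) (d : Fin n → ℝ) (hd0 : d ≠ 0) (hsum : ∑ k, d k = 0)
    (c : Fin n → ℝ) (hc : ∑ k, c k = 0) :
    c ∈ Submodule.span ℝ {v : Fin n → ℝ | ∃ σ : Equiv.Perm (Fin n), v = d ∘ σ} := by
  set S : Set (Fin n → ℝ) := {v : Fin n → ℝ | ∃ σ : Equiv.Perm (Fin n), v = d ∘ σ} with hS
  set Sp := Submodule.span ℝ S with hSp
  -- membership of all permuted copies of d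
  have hgen : ∀ σ : Equiv.Perm (Fin n), d ∘ σ ∈ Sp :=
    fun σ => Submodule.subset_span ⟨σ, rfl⟩
  -- closure under precomposition with a permutation
  have hpre : ∀ τ : Equiv.Perm (Fin n), ∀ v ∈ Sp, v ∘ τ ∈ Sp := by
    intro τ v hv
    induction hv using Submodule.span_induction with
    | mem x hx =>
        obtain ⟨σ, rfl⟩ := hx
        exact Submodule.subset_span ⟨τ.trans σ, rfl⟩
    | zero => simpa using Sp.zero_mem
    | add x y _ _ hx hy => exact Sp.add_mem hx hy
    | smul a x _ hx => exact Sp.smul_mem a hx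
  -- there are two indices with distinct values of d
  obtain ⟨i, j, hij, hdij⟩ : ∃ i j : Fin n, i ≠ j ∧ d i ≠ d j := by
    by_contra hcon
    push_neg at hcon
    have hall : ∀ i j : Fin n, d i = d j := by
      intro i j
      rcases eq_or_ne i j with rfl | h
      · rfl
      · exact hcon i j h
    obtain ⟨k, hk⟩ := Function.ne_iff.mp hd0
    have : ∑ m, d m = (n : ℝ) * d k := by
      rw [Finset.sum_congr rfl (fun m _ => hall m k)]
      simp [Finset.card_univ, mul_comm]
    rw [hsum] at this
    have hn0 : (n : ℝ) ≠ 0 := by positivity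
    exact hk (by simpa [Pi.zero_apply] using (mul_eq_zero.mp this.symm).resolve_left hn0)
  -- the difference vector single i - single j lies in the span
  have hdiff : (Pi.single i (1:ℝ) - Pi.single j 1) ∈ Sp := by
    have h1 : d ∘ (1 : Equiv.Perm (Fin n)) ∈ Sp := hgen 1
    have h2 : d ∘ (Equiv.swap i j) ∈ Sp := hgen _
    have key : d ∘ (1 : Equiv.Perm (Fin n)) - d ∘ (Equiv.swap i j)
        = (d i - d j) • (Pi.single i (1:ℝ) - Pi.single j 1) := by
      funext m
      simp only [Pi.sub_apply, Function.comp_apply, Equiv.Perm.coe_one, id_eq, Pi.smul_apply,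
        smul_eq_mul, Pi.single_apply, Equiv.swap_apply_def]
      by_cases h1 : m = i
      · subst h1; simp [hij]
      · by_cases h2 : m = j
        · subst h2; simp [Ne.symm hij, h1]
        · simp [h1, h2]
    have hmem : (d i - d j) • (Pi.single i (1:ℝ) - Pi.single j 1) ∈ Sp := by
      rw [← key]; exact Sp.sub_mem h1 h2
    have := Sp.smul_mem (d i - d j)⁻¹ hmem
    rwa [smul_smul, inv_mul_cancel₀ (sub_ne_zero.mpr hdij), one_smul] at this
  -- all difference vectors lie in the span
  have hdiffs : ∀ k l : Fin n, k ≠ l → (Pi.single k (1:ℝ) - Pi.single l 1) ∈ Sp := by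
    intro k l hkl
    set τ1 := Equiv.swap i k with hτ1
    have hτ1k : τ1 k = i := Equiv.swap_apply_right i k
    set τ2 := Equiv.swap (τ1 l) j with hτ2
    have hne1 : τ1 l ≠ i := by
      rw [← hτ1k]; exact fun h => hkl (τ1.injective h).symm
    set τ := τ1.trans τ2 with hτ
    have hτk : τ k = i := by
      rw [hτ, Equiv.trans_apply, hτ1k, hτ2]
      exact Equiv.swap_apply_of_ne_of_ne (Ne.symm hne1) hij
    have hτl : τ l = j := by
      rw [hτ, Equiv.trans_apply, hτ2]
      exact Equiv.swap_apply_left _ _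
    have := hpre τ (Pi.single i (1:ℝ) - Pi.single j 1) hdiff
    have hfun : (Pi.single i (1:ℝ) - Pi.single j 1) ∘ τ
        = (Pi.single k (1:ℝ) - Pi.single l 1 : Fin n → ℝ) := by
      funext m
      simp only [Function.comp_apply, Pi.sub_apply, Pi.single_apply]
      have e1 : (τ m = i) = (m = k) := by
        rw [← hτk]; exact propext τ.apply_eq_iff_eq
      have e2 : (τ m = j) = (m = l) := by
        rw [← hτl]; exact propext τ.apply_eq_iff_eq
      simp only [e1, e2]
    rwa [hfun] at this
  -- decompose c
  have hdecomp : c = ∑ k, c k • (Pi.single k (1:ℝ) - Pi.single i 1) := by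
    funext m
    rw [Finset.sum_apply]
    simp only [Pi.smul_apply, Pi.sub_apply, Pi.single_apply, smul_eq_mul, mul_sub]
    rw [Finset.sum_sub_distrib]
    have e1 : ∑ k, c k * (if m = k then (1:ℝ) else 0) = c m := by
      simp [mul_ite, Finset.sum_ite_eq]
    have e2 : ∑ k, c k * (if m = i then (1:ℝ) else 0) = 0 := by
      by_cases h : m = i
      · simp [h, ← Finset.sum_mul, hc]
      · simp [h]
    rw [e1, e2, sub_zero]
  rw [hdecomp]
  refine Submodule.sum_mem _ (fun k _ => ?_)
  rcases eq_or_ne k i with rfl | h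
  · simp
  · exact Sp.smul_mem _ (hdiffs k i h)

lemma myso_diag0 : diagonal (0 : Fin n → ℝ) = (0 : Matrix (Fin n) (Fin n) ℝ) := by
  ext k l
  rcases eq_or_ne k l with rfl | h
  · simp
  · simp [Matrix.diagonal_apply_ne _ h]

lemma myso_diag_add (x y : Fin n → ℝ) :
    diagonal (x + y) = diagonal x + diagonal y := by
  ext k l
  rcases eq_or_ne k l with rfl | h
  · simp
  · simp [Matrix.diagonal_apply_ne _ h]

lemma myso_diag_smul (a : ℝ) (x : Fin n → ℝ) :
    diagonal (a • x) = a • diagonal x := by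
  ext k l
  rcases eq_or_ne k l with rfl | h
  · simp
  · simp [Matrix.diagonal_apply_ne _ h]

lemma myso_dsum (f : Fin n → Fin n → ℝ) (a b : Fin n) :
    ∑ k, ∑ l, f k l * (if k = a ∧ l = b then (1:ℝ) else 0) = f a b := by
  have h1 : ∀ k, ∑ l, f k l * (if k = a ∧ l = b then (1:ℝ) else 0)
      = if k = a then f k b else 0 := by
    intro k
    by_cases hk : k = a
    · subst hk
      simp [mul_ite, Finset.sum_ite_eq']
    · simp [hk]
  rw [Finset.sum_congr rfl (fun k _ => h1 k), Finset.sum_ite_eq' Finset.univ a]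
  simp

lemma myso_decomp (M : Matrix (Fin n) (Fin n) ℝ) (hsym : Mᵀ = M) :
    M = diagonal (fun k => M k k)
      + (1/2 : ℝ) • ∑ k, ∑ l, (if k = l then (0:ℝ) else M k l) •
          (Matrix.single k l (1:ℝ) + Matrix.single l k 1) := by
  ext a b
  rw [Matrix.add_apply, Matrix.smul_apply, smul_eq_mul]
  have hsum : ((∑ k, ∑ l, (if k = l then (0:ℝ) else M k l) •
      (Matrix.single k l (1:ℝ) + Matrix.single l k 1) : Matrix (Fin n) (Fin n) ℝ)) a b
      = ∑ k, ∑ l, (if k = l then (0:ℝ) else M k l) *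
          ((if k = a ∧ l = b then (1:ℝ) else 0) + (if l = a ∧ k = b then (1:ℝ) else 0)) := by
    rw [Matrix.sum_apply]
    refine Finset.sum_congr rfl (fun k _ => ?_)
    rw [Matrix.sum_apply]
    refine Finset.sum_congr rfl (fun l _ => ?_)
    rw [Matrix.smul_apply, Matrix.add_apply, smul_eq_mul]
    rfl
  rw [hsum]
  have hsplit : ∑ k, ∑ l, (if k = l then (0:ℝ) else M k l) *
      ((if k = a ∧ l = b then (1:ℝ) else 0) + (if l = a ∧ k = b then (1:ℝ) else 0))
      = (if a = b then (0:ℝ) else M a b) + (if b = a then (0:ℝ) else M b a) := by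
    have e0 : ∀ k l, (if k = l then (0:ℝ) else M k l) *
        ((if k = a ∧ l = b then (1:ℝ) else 0) + (if l = a ∧ k = b then (1:ℝ) else 0))
        = (if k = l then (0:ℝ) else M k l) * (if k = a ∧ l = b then (1:ℝ) else 0)
          + (if k = l then (0:ℝ) else M k l) * (if k = b ∧ l = a then (1:ℝ) else 0) := by
      intro k l
      rw [mul_add, if_congr (and_comm (a := l = a) (b := k = b)) rfl rfl]
    rw [Finset.sum_congr rfl (fun k _ => Finset.sum_congr rfl (fun l _ => e0 k l))]
    simp only [Finset.sum_add_distrib]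
    rw [myso_dsum (fun k l => if k = l then (0:ℝ) else M k l) a b,
      myso_dsum (fun k l => if k = l then (0:ℝ) else M k l) b a]
  rw [hsplit]
  have hMba : M b a = M a b := by
    have h := congrFun (congrFun hsym b) a
    simpa [Matrix.transpose_apply] using h.symm
  rcases eq_or_ne a b with rfl | h
  · simp [diagonal_apply_eq]
  · rw [diagonal_apply_ne _ h, if_neg h, if_neg (Ne.symm h), hMba]
    ring

/-- The space of real symmetric `n × n` matrices of trace zero. -/
def symTraceZero (n : ℕ) : Submodule ℝ (Matrix (Fin n) (Fin n) ℝ) where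
  carrier := {X | Xᵀ = X ∧ X.trace = 0}
  add_mem' := by
    rintro a b ⟨ha1, ha2⟩ ⟨hb1, hb2⟩
    exact ⟨by simp [Matrix.transpose_add, ha1, hb1], by simp [Matrix.trace_add, ha2, hb2]⟩
  zero_mem' := ⟨by simp, by simp⟩
  smul_mem' := by
    rintro c a ⟨h1, h2⟩
    exact ⟨by simp [Matrix.transpose_smul, h1], by simp [Matrix.trace_smul, h2]⟩

/-- For `n ≥ 2`, the span of the `SO(n)`-orbit of a nonzero symmetric trace-zero
matrix is the whole space of symmetric trace-zero matrices. -/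
theorem span_so_orbit_eq_symTraceZero (n : ℕ) (hn : 2 ≤ n)
    (X : Matrix (Fin n) (Fin n) ℝ) (hX : X ≠ 0) (hXsym : Xᵀ = X) (hXtr : X.trace = 0) :
    Submodule.span ℝ {M | ∃ U ∈ Matrix.specialOrthogonalGroup (Fin n) ℝ, M = U * X * Uᵀ}
      = symTraceZero n := by
  have hn0 : 0 < n := by omega
  set S : Set (Matrix (Fin n) (Fin n) ℝ) :=
    {M | ∃ U ∈ Matrix.specialOrthogonalGroup (Fin n) ℝ, M = U * X * Uᵀ} with hSdef
  set W := Submodule.span ℝ S with hWdef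
  have hmemW : ∀ U ∈ Matrix.specialOrthogonalGroup (Fin n) ℝ, U * X * Uᵀ ∈ W :=
    fun U hU => Submodule.subset_span ⟨U, hU, rfl⟩
  -- W is invariant under conjugation by SO(n)
  have conj_mem : ∀ V ∈ Matrix.specialOrthogonalGroup (Fin n) ℝ, ∀ M ∈ W, V * M * Vᵀ ∈ W := by
    intro V hV M hM
    induction hM using Submodule.span_induction with
    | mem x hx =>
        obtain ⟨U, hU, rfl⟩ := hx
        have : V * (U * X * Uᵀ) * Vᵀ = (V * U) * X * (V * U)ᵀ := by
          rw [transpose_mul]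
          simp only [Matrix.mul_assoc]
        rw [this]
        exact hmemW _ (myso_so_mul hV hU)
    | zero => simpa using W.zero_mem
    | add x y _ _ hx hy =>
        have : V * (x + y) * Vᵀ = V * x * Vᵀ + V * y * Vᵀ := by
          rw [Matrix.mul_add, Matrix.add_mul]
        rw [this]; exact W.add_mem hx hy
    | smul a x _ hx =>
        have : V * (a • x) * Vᵀ = a • (V * x * Vᵀ) := by
          rw [Matrix.mul_smul, Matrix.smul_mul]
        rw [this]; exact W.smul_mem a hx
  -- spectral theorem
  have hXherm : X.IsHermitian := by
    have : Xᴴ = Xᵀ := by ext k l; simp [Matrix.conjTranspose_apply]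
    exact this.trans hXsym
  set d : Fin n → ℝ := hXherm.eigenvalues with hd
  set U : Matrix (Fin n) (Fin n) ℝ := (hXherm.eigenvectorUnitary : Matrix (Fin n) (Fin n) ℝ)
    with hUdef
  have hUorth : U ∈ Matrix.orthogonalGroup (Fin n) ℝ := hXherm.eigenvectorUnitary.2
  have hXeq : X = U * diagonal d * Uᵀ := by
    have := hXherm.spectral_theorem
    simpa [myso_star_eq] using this
  obtain ⟨Q, hQso, hQ⟩ := myso_fixup hn0 hUorth
  have hXQ : Q * diagonal d * Qᵀ = X := by rw [hQ d, ← hXeq]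
  have hQorth : Q * Qᵀ = 1 := (myso_orth_iff Q).mp hQso.1
  have hQorth' : Qᵀ * Q = 1 := mul_eq_one_comm.mp hQorth
  -- the diagonal matrix of eigenvalues is in W
  have hDmem : diagonal d ∈ W := by
    have h1 : Qᵀ * X * (Qᵀ)ᵀ ∈ W := hmemW _ (myso_so_transpose hQso)
    have h2 : Qᵀ * X * (Qᵀ)ᵀ = diagonal d := by
      rw [transpose_transpose, ← hXQ]
      calc Qᵀ * (Q * diagonal d * Qᵀ) * Q
          = (Qᵀ * Q) * diagonal d * (Qᵀ * Q) := by simp only [Matrix.mul_assoc]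
        _ = diagonal d := by rw [hQorth', Matrix.one_mul, Matrix.mul_one]
    rwa [h2] at h1
  -- conjugating a diagonal member of W by an orthogonal matrix stays in W
  have horthconj : ∀ A ∈ Matrix.orthogonalGroup (Fin n) ℝ, ∀ e : Fin n → ℝ,
      diagonal e ∈ W → A * diagonal e * Aᵀ ∈ W := by
    intro A hA e he
    obtain ⟨V, hVso, hV⟩ := myso_fixup hn0 hA
    rw [← hV e]
    exact conj_mem V hVso _ he
  -- permuted copies of d
  have hperm : ∀ σ : Equiv.Perm (Fin n), diagonal (d ∘ σ) ∈ W := by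
    intro σ
    have := horthconj _ (myPerm_orth σ) d hDmem
    rwa [myPerm_conj σ d] at this
  -- sum of d is zero, d is nonzero
  have hdsum : ∑ k, d k = 0 := by
    have h1 : X.trace = (diagonal d).trace := by
      rw [← hXQ, Matrix.trace_mul_cycle, hQorth', Matrix.one_mul]
    rw [h1] at hXtr
    rwa [Matrix.trace_diagonal] at hXtr
  have hdne : d ≠ 0 := by
    intro h
    apply hX
    rw [← hXQ, h, myso_diag0]
    simp
  -- all trace-zero diagonal matrices are in W
  have hdiagspan : ∀ v : Fin n → ℝ,
      v ∈ Submodule.span ℝ {v : Fin n → ℝ | ∃ σ : Equiv.Perm (Fin n), v = d ∘ σ} →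
      diagonal v ∈ W := by
    intro v hv
    induction hv using Submodule.span_induction with
    | mem x hx => obtain ⟨σ, rfl⟩ := hx; exact hperm σ
    | zero => rw [myso_diag0]; exact W.zero_mem
    | add x y _ _ hx hy => rw [myso_diag_add]; exact W.add_mem hx hy
    | smul a x _ hx => rw [myso_diag_smul]; exact W.smul_mem a hx
  have hdiagmem : ∀ c : Fin n → ℝ, ∑ k, c k = 0 → diagonal c ∈ W :=
    fun c hc => hdiagspan c (myso_vec_span hn d hdne hdsum c hc)
  -- off-diagonal symmetric units are in W
  have hstd : ∀ k l : Fin n, k ≠ l →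
      Matrix.single k l (1:ℝ) + Matrix.single l k 1 ∈ W := by
    intro k l hkl
    have hEsum : ∑ m, (Pi.single k (1:ℝ) - Pi.single l 1 : Fin n → ℝ) m = 0 := by
      simp [Finset.sum_sub_distrib, Pi.single_apply]
    have hE : diagonal (Pi.single k (1:ℝ) - Pi.single l 1 : Fin n → ℝ) ∈ W := hdiagmem _ hEsum
    set a : ℝ := Real.sqrt 2 / 2 with ha
    have haa : a * a = 1/2 := by
      rw [ha, div_mul_div_comm, Real.mul_self_sqrt (by norm_num)]
      norm_num
    have hGorth : myGivens k l a a ∈ Matrix.orthogonalGroup (Fin n) ℝ :=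
      myGivens_orth k l hkl a a (by linarith)
    have hconj := horthconj _ hGorth _ hE
    rw [myGivens_conj k l hkl a haa] at hconj
    have := W.neg_mem hconj
    rwa [neg_neg] at this
  -- conclude
  apply le_antisymm
  · rw [Submodule.span_le]
    rintro M ⟨V, hV, rfl⟩
    have hVorth : V * Vᵀ = 1 := (myso_orth_iff V).mp hV.1
    have hVorth' : Vᵀ * V = 1 := mul_eq_one_comm.mp hVorth
    constructor
    · rw [transpose_mul, transpose_mul, transpose_transpose, hXsym, Matrix.mul_assoc]
    · rw [Matrix.trace_mul_cycle, hVorth', Matrix.one_mul, hXtr]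
  · intro M hM
    obtain ⟨hMsym, hMtr⟩ := hM
    rw [myso_decomp M hMsym]
    refine W.add_mem ?_ (W.smul_mem _ (Submodule.sum_mem _ (fun k _ =>
      Submodule.sum_mem _ (fun l _ => ?_))))
    · refine hdiagmem _ ?_
      simpa [Matrix.trace, Matrix.diag] using hMtr
    · rcases eq_or_ne k l with rfl | h
      · rw [if_pos rfl, zero_smul]; exact W.zero_mem
      · rw [if_neg h]
        exact W.smul_mem _ (hstd k l h)
end

section
/- For n ≥ 3, the commutant of SO(n) in M_n(ℂ) consists exactly of the complex scalar multiples of the identity matrix: if X ∈ M_n(ℂ) satisfies XU = UX for all U ∈ SO(n), then X = α·I_n for some α ∈ ℂ. -/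
open Matrix

namespace SOAux

variable {n : ℕ}

/-- Rotation by 90 degrees in the (i,j) coordinate plane. -/
def rot (R : Type*) [CommRing R] (i j : Fin n) : Matrix (Fin n) (Fin n) R :=
  1 - single i i 1 - single j j 1 - single i j 1 + single j i 1

lemma rot_mul_rot (R : Type*) [CommRing R] {i j : Fin n} (hij : i ≠ j) :
    rot R i j * rot R j i = 1 := by
  simp only [rot, mul_sub, sub_mul, mul_add, add_mul, one_mul, mul_one,
    Matrix.single_mul_single_same, Matrix.single_mul_single_of_ne, hij, ne_eq, not_false_eq_true,
    hij.symm, one_mul, mul_one]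
  abel

lemma star_rot {i j : Fin n} : star (rot ℝ i j) = rot ℝ j i := by
  ext a b
  simp [rot, Matrix.star_apply, Matrix.one_apply, Matrix.single, Matrix.sub_apply,
    Matrix.add_apply, and_comm, eq_comm]
  split_ifs <;> simp_all

lemma rot_eq_perm {i j : Fin n} (hij : i ≠ j) :
    rot ℝ i j = (Equiv.swap i j).permMatrix ℝ *
      Matrix.diagonal (Function.update (fun _ => (1:ℝ)) j (-1)) := by
  ext k l
  rw [Matrix.mul_diagonal]
  rw [show ((Equiv.swap i j).permMatrix ℝ) k l = if (Equiv.swap i j) k = l then 1 else 0 by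
    rw [Equiv.Perm.permMatrix, PEquiv.toMatrix_apply, Equiv.toPEquiv_apply]
    simp [eq_comm]]
  rcases eq_or_ne k i with hki | hki <;> rcases eq_or_ne k j with hkj | hkj <;>
    rcases eq_or_ne l i with hli | hli <;> rcases eq_or_ne l j with hlj | hlj <;>
    simp_all [rot, Matrix.single, Matrix.sub_apply, Matrix.add_apply, Matrix.one_apply,
      Equiv.swap_apply_def, Function.update_apply] <;> split_ifs <;> simp_all

lemma det_rot {i j : Fin n} (hij : i ≠ j) : (rot ℝ i j).det = 1 := by
  rw [rot_eq_perm hij, Matrix.det_mul, Matrix.det_permutation, Equiv.Perm.sign_swap hij,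
    Matrix.det_diagonal, Finset.prod_update_of_mem (Finset.mem_univ j)]
  simp

lemma rot_mem {i j : Fin n} (hij : i ≠ j) :
    rot ℝ i j ∈ Matrix.specialOrthogonalGroup (Fin n) ℝ := by
  refine Matrix.mem_specialOrthogonalGroup_iff.2 ⟨(Matrix.mem_orthogonalGroup_iff _ _).2 ?_,
    det_rot hij⟩
  rw [← Matrix.conjTranspose_eq_transpose_of_trivial, ← Matrix.star_eq_conjTranspose, star_rot]
  exact rot_mul_rot ℝ hij

lemma map_rot {i j : Fin n} : (rot ℝ i j).map Complex.ofReal = rot ℂ i j := by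
  ext a b
  simp [rot, Matrix.map_apply, Matrix.one_apply, Matrix.single, Matrix.sub_apply,
    Matrix.add_apply, apply_ite Complex.ofReal]

end SOAux

open SOAux in
/-- For `n ≥ 3`, the commutant of `SO(n)` in `M_n(ℂ)` consists exactly of the
scalar matrices. -/
theorem so_commutant_scalar (n : ℕ) (hn : 3 ≤ n) (X : Matrix (Fin n) (Fin n) ℂ)
    (hX : ∀ U ∈ Matrix.specialOrthogonalGroup (Fin n) ℝ,
      X * U.map Complex.ofReal = U.map Complex.ofReal * X) :
    ∃ α : ℂ, X = α • (1 : Matrix (Fin n) (Fin n) ℂ) := by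
  have hC : ∀ i j : Fin n, i ≠ j → X * rot ℂ i j = rot ℂ i j * X := by
    intro i j hij
    rw [← map_rot]
    exact hX _ (rot_mem hij)
  -- diagonal entries are all equal
  have fact1 : ∀ i j : Fin n, i ≠ j → X j j = X i i := by
    intro i j hij
    have h := congrArg (fun M => M j i) (hC i j hij)
    simp only [rot, mul_sub, mul_add, mul_one, sub_mul, add_mul, one_mul,
      Matrix.sub_apply, Matrix.add_apply] at h
    simp [hij, hij.symm] at h
    linear_combination h
  -- off diagonal entries vanish
  have fact2 : ∀ p q : Fin n, p ≠ q → X p q = 0 := by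
    intro p q hpq
    obtain ⟨r, hrp, hrq⟩ : ∃ r : Fin n, r ≠ p ∧ r ≠ q := by
      by_contra h
      push_neg at h
      have hsub : (Finset.univ : Finset (Fin n)) ⊆ {p, q} := by
        intro x _
        rcases eq_or_ne x p with h' | h'
        · simp [h']
        · simp [h x h']
      have hcard := Finset.card_le_card hsub
      have h2 : ({p, q} : Finset (Fin n)).card ≤ 2 :=
        (Finset.card_insert_le _ _).trans (by simp)
      simp only [Finset.card_univ, Fintype.card_fin] at hcard
      omega
    have hqr : q ≠ r := hrq.symm
    have h1 := congrArg (fun M => M p q) (hC q r hqr)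
    have h2 := congrArg (fun M => M p r) (hC q r hqr)
    simp only [rot, mul_sub, mul_add, mul_one, sub_mul, add_mul, one_mul,
      Matrix.sub_apply, Matrix.add_apply] at h1 h2
    simp [hpq, hpq.symm, hqr, hqr.symm, hrp, hrp.symm, hrq, hrq.symm] at h1 h2
    linear_combination -(h1 + h2) / 2
  refine ⟨X ⟨0, by omega⟩ ⟨0, by omega⟩, ?_⟩
  ext a b
  rcases eq_or_ne a b with rfl | hab
  · rcases eq_or_ne a ⟨0, by omega⟩ with haz | haz
    · rw [haz]; simp
    · simp [Matrix.smul_apply, Matrix.one_apply, fact1 ⟨0, by omega⟩ a haz.symm]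
  · simp [fact2 a b hab, Matrix.smul_apply, Matrix.one_apply, hab]
end

section
/- For every n ≥ 2, the set of matrices in SO(n) with nonzero trace is dense in SO(n). -/
open Matrix

namespace NZTAux

open Real Topology Filter

variable {n : ℕ}

/-- Rotation by angle `θ` in the coordinate plane spanned by `e i` and `e j`. -/
noncomputable def rot (i j : Fin n) (θ : ℝ) : Matrix (Fin n) (Fin n) ℝ :=
  1 + (Real.cos θ - 1) • (Matrix.single i i (1:ℝ) + Matrix.single j j 1)
    + Real.sin θ • (Matrix.single j i (1:ℝ) - Matrix.single i j 1)

lemma rot_zero (i j : Fin n) : rot i j 0 = 1 := by simp [rot]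

lemma single_transpose (a b : Fin n) :
    (Matrix.single a b (1:ℝ))ᵀ = Matrix.single b a 1 := by
  ext x y
  simp [Matrix.single, Matrix.transpose_apply, and_comm]

lemma rot_transpose (i j : Fin n) (θ : ℝ) : (rot i j θ)ᵀ = rot i j (-θ) := by
  simp only [rot, transpose_add, transpose_smul, transpose_sub, transpose_one,
    single_transpose, Real.cos_neg, Real.sin_neg]
  module

lemma rot_add {i j : Fin n} (hij : i ≠ j) (a b : ℝ) :
    rot i j (a + b) = rot i j a * rot i j b := by
  have hmul : ∀ a b l : Fin n,
      Matrix.single a b (1:ℝ) * Matrix.single b l 1 = Matrix.single a l 1 := by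
    intro a b l; rw [Matrix.single_mul_single_same, one_mul]
  have h0a : ∀ a l : Fin n, Matrix.single a i (1:ℝ) * Matrix.single j l 1 = 0 :=
    fun a l => Matrix.single_mul_single_of_ne _ _ _ _ hij _
  have h0b : ∀ a l : Fin n, Matrix.single a j (1:ℝ) * Matrix.single i l 1 = 0 :=
    fun a l => Matrix.single_mul_single_of_ne _ _ _ _ hij.symm _
  set P : Matrix (Fin n) (Fin n) ℝ := Matrix.single i i (1:ℝ) + Matrix.single j j 1 with hP
  set Q : Matrix (Fin n) (Fin n) ℝ := Matrix.single j i (1:ℝ) - Matrix.single i j 1 with hQ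
  have hPP : P * P = P := by
    simp only [hP, add_mul, mul_add, hmul, h0a, h0b, add_zero, zero_add]
  have hPQ : P * Q = Q := by
    simp only [hP, hQ, add_mul, mul_add, mul_sub, sub_mul, hmul, h0a, h0b]
    abel
  have hQP : Q * P = Q := by
    simp only [hP, hQ, add_mul, mul_add, mul_sub, sub_mul, hmul, h0a, h0b]
    abel
  have hQQ : Q * Q = -P := by
    simp only [hP, hQ, mul_sub, sub_mul, hmul, h0a, h0b]
    abel
  show (1 : Matrix (Fin n) (Fin n) ℝ) + (Real.cos (a+b) - 1) • P + Real.sin (a+b) • Q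
      = (1 + (Real.cos a - 1) • P + Real.sin a • Q) * (1 + (Real.cos b - 1) • P + Real.sin b • Q)
  simp only [mul_add, add_mul, one_mul, mul_one, smul_mul_assoc, mul_smul_comm, smul_smul]
  rw [hPP, hPQ, hQP, hQQ, Real.cos_add, Real.sin_add]
  module

lemma rot_star (i j : Fin n) (θ : ℝ) : star (rot i j θ) = rot i j (-θ) := by
  ext a b
  rw [Matrix.star_apply, star_trivial, ← rot_transpose, Matrix.transpose_apply]

lemma rot_mul_neg {i j : Fin n} (hij : i ≠ j) (θ : ℝ) :
    rot i j θ * rot i j (-θ) = 1 := by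
  rw [← rot_add hij, add_neg_cancel, rot_zero]

lemma rot_mem {i j : Fin n} (hij : i ≠ j) (θ : ℝ) :
    rot i j θ ∈ specialOrthogonalGroup (Fin n) ℝ := by
  have hu : rot i j θ ∈ unitaryGroup (Fin n) ℝ := by
    rw [Matrix.mem_unitaryGroup_iff, rot_star, rot_mul_neg hij]
  have hdetsq : (rot i j θ).det * (rot i j θ).det = 1 := by
    have h := congrArg Matrix.det (rot_mul_neg hij θ)
    rw [Matrix.det_mul, Matrix.det_one, ← rot_transpose, Matrix.det_transpose] at h
    exact h
  have hdet : (rot i j θ).det = 1 := by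
    rcases mul_self_eq_one_iff.mp hdetsq with h | h
    · exact h
    · exfalso
      have h2 : (rot i j θ).det = (rot i j (θ/2)).det * (rot i j (θ/2)).det := by
        rw [← Matrix.det_mul, ← rot_add hij, add_halves]
      nlinarith [mul_self_nonneg (rot i j (θ/2)).det]
  exact Matrix.mem_specialUnitaryGroup_iff.mpr ⟨hu, hdet⟩

lemma trace_mul_single (M : Matrix (Fin n) (Fin n) ℝ) (a b : Fin n) :
    (M * Matrix.single a b (1:ℝ)).trace = M b a := by
  rw [Matrix.trace, Finset.sum_eq_single b]
  · simp [Matrix.diag]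
  · intro x _ hx
    simpa [Matrix.diag] using Matrix.mul_single_apply_of_ne 1 a b x x hx M
  · simp

lemma trace_mul_rot (A : Matrix (Fin n) (Fin n) ℝ) (i j : Fin n) (θ : ℝ) :
    (A * rot i j θ).trace = A.trace + (Real.cos θ - 1) * (A i i + A j j)
      + Real.sin θ * (A i j - A j i) := by
  simp only [rot, Matrix.mul_add, Matrix.mul_smul, Matrix.mul_sub, Matrix.mul_one,
    trace_add, trace_smul, trace_sub, trace_mul_single, smul_eq_mul]
  try ring

lemma mul_rot_fst {i j : Fin n} (hij : i ≠ j) (A : Matrix (Fin n) (Fin n) ℝ) (θ : ℝ) (a : Fin n) :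
    (A * rot i j θ) a i = Real.cos θ * A a i + Real.sin θ * A a j := by
  simp only [rot, Matrix.mul_add, Matrix.mul_smul, Matrix.mul_sub, Matrix.mul_one,
    Matrix.add_apply, Matrix.smul_apply, Matrix.sub_apply,
    Matrix.mul_single_apply_same,
    Matrix.mul_single_apply_of_ne _ _ _ _ _ hij.symm,
    Matrix.mul_single_apply_of_ne _ _ _ _ _ hij, smul_eq_mul]
  ring

lemma mul_rot_snd {i j : Fin n} (hij : i ≠ j) (A : Matrix (Fin n) (Fin n) ℝ) (θ : ℝ) (a : Fin n) :
    (A * rot i j θ) a j = Real.cos θ * A a j - Real.sin θ * A a i := by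
  simp only [rot, Matrix.mul_add, Matrix.mul_smul, Matrix.mul_sub, Matrix.mul_one,
    Matrix.add_apply, Matrix.smul_apply, Matrix.sub_apply,
    Matrix.mul_single_apply_same,
    Matrix.mul_single_apply_of_ne _ _ _ _ _ hij,
    Matrix.mul_single_apply_of_ne _ _ _ _ _ hij.symm, smul_eq_mul]
  ring

lemma mul_rot_other {i j b : Fin n} (hbi : b ≠ i) (hbj : b ≠ j)
    (A : Matrix (Fin n) (Fin n) ℝ) (θ : ℝ) (a : Fin n) :
    (A * rot i j θ) a b = A a b := by
  simp only [rot, Matrix.mul_add, Matrix.mul_smul, Matrix.mul_sub, Matrix.mul_one,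
    Matrix.add_apply, Matrix.smul_apply, Matrix.sub_apply,
    Matrix.mul_single_apply_of_ne _ _ _ _ _ hbi,
    Matrix.mul_single_apply_of_ne _ _ _ _ _ hbj, smul_eq_mul]
  ring

lemma continuous_rot (i j : Fin n) : Continuous (rot i j) := by
  unfold rot
  exact (continuous_const.add
    ((Real.continuous_cos.sub continuous_const).smul continuous_const)).add
    (Real.continuous_sin.smul continuous_const)

lemma approx (A : Matrix (Fin n) (Fin n) ℝ)
    (F : ℝ → Matrix (Fin n) (Fin n) ℝ) (hF : Continuous F) (hF0 : F 0 = A)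
    (hmem : ∀ t, F t ∈ specialOrthogonalGroup (Fin n) ℝ)
    (htr : ∀ θ : ℝ, 0 < θ → θ ≤ 1 → (F θ).trace ≠ 0 ∨ (F (-θ)).trace ≠ 0) :
    A ∈ closure {X | X ∈ specialOrthogonalGroup (Fin n) ℝ ∧ X.trace ≠ 0} := by
  apply mem_closure_of_frequently_of_tendsto (f := F) (b := 𝓝 (0:ℝ))
  · rw [Filter.frequently_iff]
    intro U hU
    obtain ⟨δ, hδ, hball⟩ := Metric.mem_nhds_iff.mp hU
    set θ := min (δ/2) 1 with hθdef
    have hθpos : 0 < θ := lt_min (by linarith) one_pos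
    have hθ1 : θ ≤ 1 := min_le_right _ _
    have hmemU : ∀ s : ℝ, |s| = θ → s ∈ U := by
      intro s hs
      apply hball
      rw [Metric.mem_ball, Real.dist_eq, sub_zero, hs]
      calc θ ≤ δ/2 := min_le_left _ _
        _ < δ := by linarith
    rcases htr θ hθpos hθ1 with h | h
    · exact ⟨θ, hmemU θ (abs_of_pos hθpos), hmem θ, h⟩
    · exact ⟨-θ, hmemU (-θ) (by rw [abs_neg]; exact abs_of_pos hθpos), hmem _, h⟩
  · rw [← hF0]
    exact hF.continuousAt.tendsto

end NZTAux

/-- For `n ≥ 2`, matrices with nonzero trace are dense in `SO(n)`. -/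
theorem nonzero_trace_dense_in_so (n : ℕ) (hn : 2 ≤ n) :
    (Matrix.specialOrthogonalGroup (Fin n) ℝ : Set (Matrix (Fin n) (Fin n) ℝ)) ⊆
      closure {X | X ∈ Matrix.specialOrthogonalGroup (Fin n) ℝ ∧ X.trace ≠ 0} := by
  intro A hA
  have hA' : A ∈ Matrix.specialOrthogonalGroup (Fin n) ℝ := hA
  by_cases h0 : A.trace ≠ 0
  · exact subset_closure ⟨hA', h0⟩
  push_neg at h0
  by_cases h1 : ∃ i j : Fin n, i ≠ j ∧ (A i i + A j j ≠ 0 ∨ A i j ≠ A j i)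
  · obtain ⟨i, j, hij, hc⟩ := h1
    apply NZTAux.approx A (fun t => A * NZTAux.rot i j t)
    · exact continuous_const.matrix_mul (NZTAux.continuous_rot i j)
    · simp [NZTAux.rot_zero]
    · exact fun t => mul_mem hA' (NZTAux.rot_mem hij t)
    · intro θ hθpos hθ1
      by_contra hcon
      push_neg at hcon
      obtain ⟨e1, e2⟩ := hcon
      simp only [NZTAux.trace_mul_rot, h0, Real.cos_neg, Real.sin_neg, zero_add] at e1 e2
      have hsin : 0 < Real.sin θ :=
        Real.sin_pos_of_pos_of_lt_pi hθpos (by linarith [Real.pi_gt_three])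
      have hcos : Real.cos θ - 1 ≠ 0 := by
        intro h
        have h2 := Real.sin_sq_add_cos_sq θ
        nlinarith
      have hc0 : A i i + A j j = 0 := by
        have h2 : (Real.cos θ - 1) * (A i i + A j j) = 0 := by linarith
        rcases mul_eq_zero.mp h2 with h | h
        · exact absurd h hcos
        · exact h
      have hs0 : A i j = A j i := by
        have h2 : Real.sin θ * (A i j - A j i) = 0 := by linarith
        rcases mul_eq_zero.mp h2 with h | h
        · linarith
        · nlinarith
      rcases hc with h | h
      · exact h hc0
      · exact h hs0
  · push_neg at h1
    have hAA : star A * A = 1 :=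
      Matrix.mem_unitaryGroup_iff'.mp (Matrix.mem_specialUnitaryGroup_iff.mp hA').1
    have hdet : A.det = 1 := (Matrix.mem_specialUnitaryGroup_iff.mp hA').2
    have hcol : ∀ k : Fin n, (∑ c, A c k * A c k) = 1 := by
      intro k
      have h := congrFun (congrFun hAA k) k
      simpa [Matrix.mul_apply, Matrix.star_apply, Matrix.one_apply] using h
    rcases eq_or_lt_of_le hn with h2 | h3
    · -- n = 2 : impossible (a symmetric matrix in SO(2) with trace 0 cannot exist)
      exfalso
      subst h2
      have hd : (1:ℝ) = A 0 0 * A 1 1 - A 0 1 * A 1 0 := by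
        rw [← hdet, Matrix.det_fin_two]
      obtain ⟨hsum, hsymm⟩ := h1 0 1 (by decide)
      have hc0 := hcol 0
      rw [Fin.sum_univ_two] at hc0
      have h11 : A 1 1 = -(A 0 0) := by linarith
      rw [h11, ← hsymm] at hd
      rw [← hsymm] at hc0
      nlinarith
    · -- n ≥ 3
      have hsymm : ∀ a b : Fin n, A a b = A b a := by
        intro a b
        by_cases h : a = b
        · rw [h]
        · exact (h1 a b h).2
      set i0 : Fin n := ⟨0, by omega⟩ with hi0
      set i1 : Fin n := ⟨1, by omega⟩ with hi1
      set i2 : Fin n := ⟨2, by omega⟩ with hi2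
      have h01 : i0 ≠ i1 := by simp [hi0, hi1, Fin.ext_iff]
      have h02 : i0 ≠ i2 := by simp [hi0, hi2, Fin.ext_iff]
      have h12 : i1 ≠ i2 := by simp [hi1, hi2, Fin.ext_iff]
      have hdiag : ∀ k : Fin n, A k k = 0 := by
        intro k
        obtain ⟨a, b, hab, hak, hbk⟩ : ∃ a b : Fin n, a ≠ b ∧ a ≠ k ∧ b ≠ k := by
          by_cases hk0 : k = i0
          · exact ⟨i1, i2, h12, by rw [hk0]; exact h01.symm, by rw [hk0]; exact h02.symm⟩
          · by_cases hk1 : k = i1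
            · exact ⟨i0, i2, h02, by rw [hk1]; exact h01, by rw [hk1]; exact h12.symm⟩
            · exact ⟨i0, i1, h01, fun h => hk0 h.symm, fun h => hk1 h.symm⟩
        have e1 := (h1 k a hak.symm).1
        have e2 := (h1 k b hbk.symm).1
        have e3 := (h1 a b hab).1
        linarith
      obtain ⟨p, q, hpq, hApq⟩ : ∃ p q : Fin n, p ≠ q ∧ A p q ≠ 0 := by
        by_contra hz
        push_neg at hz
        have hzero : (∑ c, A c i0 * A c i0) = 0 := by
          apply Finset.sum_eq_zero
          intro c _
          by_cases hc : c = i0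
          · rw [hc, hdiag]; ring
          · rw [hz c i0 hc]; ring
        rw [hcol i0] at hzero
        exact one_ne_zero hzero
      obtain ⟨j, hjp, hjq⟩ : ∃ j : Fin n, j ≠ p ∧ j ≠ q := by
        by_contra hcon
        push_neg at hcon
        have hsub : (Finset.univ : Finset (Fin n)) ⊆ {p, q} := by
          intro x _
          simp only [Finset.mem_insert, Finset.mem_singleton]
          by_cases h : x = p
          · exact Or.inl h
          · exact Or.inr (hcon x h)
        have hcard := Finset.card_le_card hsub
        rw [Finset.card_univ, Fintype.card_fin] at hcard
        have hle : ({p, q} : Finset (Fin n)).card ≤ 2 := by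
          apply le_trans (Finset.card_insert_le _ _)
          simp
        omega
      have hqj : q ≠ j := hjq.symm
      have hpj : p ≠ j := hjp.symm
      apply NZTAux.approx A (fun t => A * NZTAux.rot q j t * NZTAux.rot j p t)
      · exact (continuous_const.matrix_mul (NZTAux.continuous_rot q j)).matrix_mul
          (NZTAux.continuous_rot j p)
      · simp [NZTAux.rot_zero]
      · exact fun t => mul_mem (mul_mem hA' (NZTAux.rot_mem hqj t)) (NZTAux.rot_mem hjp t)
      · intro θ hθpos hθ1
        by_contra hcon
        push_neg at hcon
        obtain ⟨e1, e2⟩ := hcon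
        have hE : ∀ s : ℝ, (A * NZTAux.rot q j s * NZTAux.rot j p s).trace =
            A.trace + (Real.cos s - 1) * (A q q + A j j) + Real.sin s * (A q j - A j q)
            + (Real.cos s - 1) * ((Real.cos s * A j j - Real.sin s * A j q) + A p p)
            + Real.sin s * (A j p - (Real.cos s * A p j - Real.sin s * A p q)) := by
          intro s
          rw [NZTAux.trace_mul_rot (A * NZTAux.rot q j s) j p s,
            NZTAux.trace_mul_rot A q j s,
            NZTAux.mul_rot_snd hqj A s j,
            NZTAux.mul_rot_snd hqj A s p,
            NZTAux.mul_rot_other hpq hpj A s p,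
            NZTAux.mul_rot_other hpq hpj A s j]
        simp only [hE, h0, hdiag, Real.cos_neg, Real.sin_neg, zero_add, add_zero,
          mul_zero, zero_sub, sub_zero, neg_neg, neg_zero] at e1 e2
        have hsin : 0 < Real.sin θ :=
          Real.sin_pos_of_pos_of_lt_pi hθpos (by linarith [Real.pi_gt_three])
        have hsjp : A j p = A p j := hsymm j p
        rw [hsjp] at e1 e2
        have hkey : Real.sin θ * (Real.sin θ * A p q) = 0 := by linarith
        rcases mul_eq_zero.mp hkey with h | h
        · linarith
        · rcases mul_eq_zero.mp h with h' | h'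
          · linarith
          · exact hApq h'
end

section
/- For n ≥ 2, any real Lie subalgebra 𝔤 of 𝔲(n) with 𝔰𝔬(n) ⊕ iℝ·I_n ⊆ 𝔤 satisfies either 𝔤 = 𝔰𝔬(n) ⊕ iℝ·I_n or 𝔤 = 𝔲(n). -/
open Matrix

set_option linter.unusedSectionVars false
set_option maxHeartbeats 1000000

namespace IntermediateLieAux

variable {ι : Type*} [Fintype ι] [DecidableEq ι]

noncomputable def Ee (p q : ι) : Matrix ι ι ℝ := single p q 1

noncomputable def ad (p q : ι) (S : Matrix ι ι ℝ) : Matrix ι ι ℝ :=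
  (Ee p q - Ee q p) * S - S * (Ee p q - Ee q p)

lemma Emul_apply (p q a b : ι) (S : Matrix ι ι ℝ) :
    (Ee p q * S) a b = if a = p then S q b else 0 := by
  rcases eq_or_ne a p with rfl | h
  · simp [Ee]
  · simp [Ee, h]

lemma mulE_apply (p q a b : ι) (S : Matrix ι ι ℝ) :
    (S * Ee p q) a b = if b = q then S a p else 0 := by
  rcases eq_or_ne b q with rfl | h
  · simp [Ee]
  · simp [Ee, h]

lemma ad_apply (p q : ι) (S : Matrix ι ι ℝ) (a b : ι) :
    ad p q S a b = ((if a = p then S q b else 0) - (if a = q then S p b else 0))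
      - ((if b = q then S a p else 0) - (if b = p then S a q else 0)) := by
  simp [ad, sub_mul, mul_sub, Emul_apply, mulE_apply, Matrix.sub_apply]

lemma keyid {p q : ι} (hpq : p ≠ q) (S : Matrix ι ι ℝ) :
    ad p q (ad p q (ad p q (ad p q S))) + ad p q (ad p q S)
      = (6 * (S p q + S q p)) • (Ee p q + Ee q p)
        + (6 * (S p p - S q q)) • (Ee p p - Ee q q) := by
  ext a b
  simp only [ad_apply, Matrix.add_apply, Matrix.sub_apply, Matrix.smul_apply, smul_eq_mul]
  by_cases hap : a = p <;> by_cases haq : a = q <;> by_cases hbp : b = p <;>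
    by_cases hbq : b = q <;>
    simp_all [Ee, single, Matrix.of_apply, eq_comm] <;> ring

lemma EE_same (p q r : ι) : Ee p q * Ee q r = Ee p r := by
  simp [Ee]

lemma EE_ne {q r : ι} (h : q ≠ r) (p s : ι) : Ee p q * Ee r s = 0 :=
  single_mul_single_of_ne (c := (1:ℝ)) p q r h 1

lemma adCD {p q : ι} (hpq : p ≠ q) :
    ad p q (Ee p q + Ee q p) = (2:ℝ) • (Ee p p - Ee q q) := by
  simp only [ad, sub_mul, mul_sub, mul_add, add_mul, EE_same, EE_ne hpq, EE_ne hpq.symm,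
    two_smul]
  abel

lemma adDC {p q : ι} (hpq : p ≠ q) :
    ad p q (Ee p p - Ee q q) = (-2:ℝ) • (Ee p q + Ee q p) := by
  simp only [ad, sub_mul, mul_sub, EE_same, EE_ne hpq, EE_ne hpq.symm, neg_smul, two_smul]
  abel

lemma prop1 {p q r : ι} (hpq : p ≠ q) (hrp : r ≠ p) (hrq : r ≠ q) :
    ad p r (Ee p p - Ee q q) = -(Ee p r + Ee r p) := by
  simp only [ad, sub_mul, mul_sub, EE_same, EE_ne hrp, EE_ne hrp.symm, EE_ne hrq, EE_ne hrq.symm,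
    EE_ne hpq, EE_ne hpq.symm]
  abel

lemma prop2 {p r s : ι} (hpr : p ≠ r) (hps : p ≠ s) (hrs : r ≠ s) :
    ad p r (Ee p s + Ee s p) = -(Ee r s + Ee s r) := by
  simp only [ad, sub_mul, mul_sub, mul_add, add_mul, EE_same, EE_ne hpr, EE_ne hpr.symm,
    EE_ne hps, EE_ne hps.symm, EE_ne hrs, EE_ne hrs.symm]
  abel

omit [Fintype ι] in
lemma skewE {p q : ι} : (Ee p q - Ee q p)ᵀ = -(Ee p q - Ee q p) := by
  ext a b
  simp only [Ee, single, Matrix.sub_apply, Matrix.transpose_apply, Matrix.neg_apply,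
    Matrix.of_apply]
  by_cases h1 : p = a <;> by_cases h2 : p = b <;> by_cases h3 : q = a <;> by_cases h4 : q = b <;>
    simp_all

omit [Fintype ι] in
lemma transpose_std (i j : ι) (c : ℝ) :
    (single i j c)ᵀ = single j i c := by
  ext a b
  simp only [single, Matrix.transpose_apply, Matrix.of_apply]
  by_cases h1 : i = a <;> by_cases h2 : i = b <;> by_cases h3 : j = a <;> by_cases h4 : j = b <;>
    simp_all

lemma ad_linear (p q : ι) (c d : ℝ) (X Y : Matrix ι ι ℝ) :
    ad p q (c • X + d • Y) = c • ad p q X + d • ad p q Y := by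
  simp only [ad, mul_add, add_mul, mul_smul_comm, smul_mul_assoc]
  module

noncomputable def Lmap : Matrix ι ι ℝ →ₗ[ℝ] Matrix ι ι ℂ where
  toFun S := Complex.I • S.map Complex.ofReal
  map_add' S T := by ext i j; simp [Matrix.map_apply]; ring
  map_smul' c S := by ext i j; simp [Matrix.map_apply, Complex.real_smul]; ring

lemma Lmap_apply (S : Matrix ι ι ℝ) : Lmap S = Complex.I • S.map Complex.ofReal := rfl

lemma mapmul (X Y : Matrix ι ι ℝ) :
    (X * Y).map Complex.ofReal = X.map Complex.ofReal * Y.map Complex.ofReal := by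
  ext i j; simp [Matrix.mul_apply, Matrix.map_apply]

lemma mapsub (X Y : Matrix ι ι ℝ) :
    (X - Y).map Complex.ofReal = X.map Complex.ofReal - Y.map Complex.ofReal := by
  ext i j; simp [Matrix.map_apply]

noncomputable def Wg (g : Submodule ℝ (Matrix ι ι ℂ)) : Submodule ℝ (Matrix ι ι ℝ) :=
  g.comap Lmap

lemma mem_Wg {g : Submodule ℝ (Matrix ι ι ℂ)} {S : Matrix ι ι ℝ} :
    S ∈ Wg g ↔ Complex.I • S.map Complex.ofReal ∈ g := Iff.rfl

variable {g : Submodule ℝ (Matrix ι ι ℂ)}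

lemma skew_mem
    (hcontains : ∀ (A : Matrix ι ι ℝ) (t : ℝ), Aᵀ = -A →
      A.map Complex.ofReal + (t • Complex.I) • (1 : Matrix ι ι ℂ) ∈ g)
    (A : Matrix ι ι ℝ) (hA : Aᵀ = -A) : A.map Complex.ofReal ∈ g := by
  have h := hcontains A 0 hA
  simpa using h

lemma adW
    (hbracket : ∀ X ∈ g, ∀ Y ∈ g, X * Y - Y * X ∈ g)
    (hcontains : ∀ (A : Matrix ι ι ℝ) (t : ℝ), Aᵀ = -A →
      A.map Complex.ofReal + (t • Complex.I) • (1 : Matrix ι ι ℂ) ∈ g)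
    (p q : ι) {S : Matrix ι ι ℝ} (hS : S ∈ Wg g) : ad p q S ∈ Wg g := by
  set A := Ee p q - Ee q p with hAdef
  have hAg : A.map Complex.ofReal ∈ g := skew_mem hcontains A skewE
  have hkey : Lmap (ad p q S) =
      A.map Complex.ofReal * (Complex.I • S.map Complex.ofReal)
        - (Complex.I • S.map Complex.ofReal) * A.map Complex.ofReal := by
    rw [Lmap_apply, ad, mapsub, mapmul, mapmul, smul_sub, mul_smul_comm, smul_mul_assoc]
  rw [mem_Wg] at hS ⊢
  show Lmap (ad p q S) ∈ g
  rw [hkey]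
  exact hbracket _ hAg _ hS

lemma one_memW
    (hcontains : ∀ (A : Matrix ι ι ℝ) (t : ℝ), Aᵀ = -A →
      A.map Complex.ofReal + (t • Complex.I) • (1 : Matrix ι ι ℂ) ∈ g) :
    (1 : Matrix ι ι ℝ) ∈ Wg g := by
  rw [mem_Wg]
  have hmap1 : (1 : Matrix ι ι ℝ).map Complex.ofReal = 1 := by
    ext i j
    simp [Matrix.map_apply, Matrix.one_apply, apply_ite Complex.ofReal]
  rw [hmap1]
  have h := hcontains 0 1 (by simp)
  have hz : (0 : Matrix ι ι ℝ).map Complex.ofReal = 0 := by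
    ext i j; simp [Matrix.map_apply]
  rw [hz, zero_add, one_smul] at h
  exact h

theorem engine {p q : ι} (hpq : p ≠ q)
    (hbracket : ∀ X ∈ g, ∀ Y ∈ g, X * Y - Y * X ∈ g)
    (hcontains : ∀ (A : Matrix ι ι ℝ) (t : ℝ), Aᵀ = -A →
      A.map Complex.ofReal + (t • Complex.I) • (1 : Matrix ι ι ℂ) ∈ g)
    {S : Matrix ι ι ℝ} (hS : S ∈ Wg g)
    (hne : S p q + S q p ≠ 0 ∨ S p p ≠ S q q) :
    ∀ T : Matrix ι ι ℝ, (∀ i j, T i j = T j i) → T ∈ Wg g := by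
  set W := Wg g with hW
  have hadW : ∀ p' q' : ι, ∀ S' ∈ W, ad p' q' S' ∈ W := fun p' q' S' hS' =>
    adW hbracket hcontains p' q' hS'
  have hone : (1 : Matrix ι ι ℝ) ∈ W := one_memW hcontains
  set C : Matrix ι ι ℝ := Ee p q + Ee q p with hC
  set D : Matrix ι ι ℝ := Ee p p - Ee q q with hD
  set a₁ : ℝ := 6 * (S p q + S q p) with ha₁
  set a₂ : ℝ := 6 * (S p p - S q q) with ha₂
  have hsq : a₁ ^ 2 + a₂ ^ 2 ≠ 0 := by
    rcases hne with h | h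
    · have : a₁ ≠ 0 := by simp [ha₁, h]
      positivity
    · have : a₂ ≠ 0 := by
        simp only [ha₂, mul_ne_zero_iff, sub_ne_zero]
        exact ⟨by norm_num, h⟩
      positivity
  have hx : a₁ • C + a₂ • D ∈ W := by
    rw [← keyid hpq S]
    exact W.add_mem (hadW p q _ (hadW p q _ (hadW p q _ (hadW p q _ hS))))
      (hadW p q _ (hadW p q _ hS))
  have hy : (-2 * a₂) • C + (2 * a₁) • D ∈ W := by
    have h1 : ad p q (a₁ • C + a₂ • D) = (-2 * a₂) • C + (2 * a₁) • D := by
      rw [ad_linear, hC, hD, adCD hpq, adDC hpq]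
      match_scalars <;> ring
    rw [← h1]
    exact hadW p q _ hx
  have hCW : C ∈ W := by
    have h5 : (a₁ ^ 2 + a₂ ^ 2) • C
        = a₁ • (a₁ • C + a₂ • D) + (-(a₂ / 2)) • ((-2 * a₂) • C + (2 * a₁) • D) := by
      match_scalars <;> ring
    have h6 : (a₁ ^ 2 + a₂ ^ 2) • C ∈ W := by
      rw [h5]; exact W.add_mem (W.smul_mem _ hx) (W.smul_mem _ hy)
    have h7 := W.smul_mem (a₁ ^ 2 + a₂ ^ 2)⁻¹ h6
    rwa [smul_smul, inv_mul_cancel₀ hsq, one_smul] at h7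
  have hDW : D ∈ W := by
    have h5 : (a₁ ^ 2 + a₂ ^ 2) • D
        = a₂ • (a₁ • C + a₂ • D) + (a₁ / 2) • ((-2 * a₂) • C + (2 * a₁) • D) := by
      match_scalars <;> ring
    have h6 : (a₁ ^ 2 + a₂ ^ 2) • D ∈ W := by
      rw [h5]; exact W.add_mem (W.smul_mem _ hx) (W.smul_mem _ hy)
    have h7 := W.smul_mem (a₁ ^ 2 + a₂ ^ 2)⁻¹ h6
    rwa [smul_smul, inv_mul_cancel₀ hsq, one_smul] at h7
  have hCp : ∀ r, r ≠ p → Ee p r + Ee r p ∈ W := by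
    intro r hr
    rcases eq_or_ne r q with rfl | hrq
    · exact hCW
    · have h := hadW p r _ hDW
      rw [hD, prop1 hpq hr hrq] at h
      exact (Submodule.neg_mem_iff W).mp h
  have hDp : ∀ r, r ≠ p → Ee p p - Ee r r ∈ W := by
    intro r hr
    have h := hadW p r _ (hCp r hr)
    rw [adCD hr.symm] at h
    have h2 := W.smul_mem (2:ℝ)⁻¹ h
    rwa [smul_smul, inv_mul_cancel₀ (by norm_num), one_smul] at h2
  have hCall : ∀ r s : ι, r ≠ s → Ee r s + Ee s r ∈ W := by
    intro r s hrs
    rcases eq_or_ne r p with rfl | hr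
    · exact hCp s (Ne.symm hrs)
    · rcases eq_or_ne s p with hsp | hs
      · have h9 := hCp r hr
        rw [← hsp] at h9
        rw [add_comm]
        exact h9
      · have h := hadW p r _ (hCp s hs)
        rw [prop2 hr.symm hs.symm hrs] at h
        exact (Submodule.neg_mem_iff W).mp h
  have hDall : ∀ r s : ι, r ≠ s → Ee r r - Ee s s ∈ W := by
    intro r s hrs
    rcases eq_or_ne r p with rfl | hr
    · exact hDp s hrs.symm
    · rcases eq_or_ne s p with hsp | hs
      · have h9 := hDp r hr
        rw [← hsp] at h9
        rw [show Ee r r - Ee s s = -(Ee s s - Ee r r) by abel]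
        exact W.neg_mem h9
      · rw [show Ee r r - Ee s s = (Ee p p - Ee s s) - (Ee p p - Ee r r) by abel]
        exact W.sub_mem (hDp s hs) (hDp r hr)
  have hsum1 : (∑ b : ι, Ee b b) = (1 : Matrix ι ι ℝ) := by
    ext i j
    rw [Matrix.sum_apply]
    rcases eq_or_ne i j with rfl | h
    · simp [Ee, single, Matrix.one_apply]
    · simp only [Matrix.one_apply, if_neg h]
      apply Finset.sum_eq_zero
      intro b _
      simp only [Ee, single, Matrix.of_apply]
      apply if_neg
      rintro ⟨rfl, rfl⟩
      exact h rfl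
  have hEaa : ∀ a : ι, Ee a a ∈ W := by
    intro a
    have hid : (1 : Matrix ι ι ℝ) + ∑ b : ι, (Ee a a - Ee b b)
        = (Fintype.card ι : ℝ) • Ee a a := by
      rw [Finset.sum_sub_distrib, Finset.sum_const, hsum1, Finset.card_univ,
        ← Nat.cast_smul_eq_nsmul ℝ]
      abel
    have hm : (Fintype.card ι : ℝ) • Ee a a ∈ W := by
      rw [← hid]
      refine W.add_mem hone (Submodule.sum_mem W ?_)
      intro b _
      rcases eq_or_ne a b with rfl | h
      · simpa using W.zero_mem
      · exact hDall a b h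
    have hcard : (Fintype.card ι : ℝ) ≠ 0 := by
      have : 0 < Fintype.card ι := @Fintype.card_pos ι _ ⟨p⟩
      positivity
    have h7 := W.smul_mem (Fintype.card ι : ℝ)⁻¹ hm
    rwa [smul_smul, inv_mul_cancel₀ hcard, one_smul] at h7
  have hpair : ∀ a b : ι, Ee a b + Ee b a ∈ W := by
    intro a b
    rcases eq_or_ne a b with rfl | h
    · exact W.add_mem (hEaa a) (hEaa a)
    · exact hCall a b h
  have hsymmem : ∀ X : Matrix ι ι ℝ, X + Xᵀ ∈ W := by
    intro X
    induction X using Matrix.induction_on' with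
    | h_zero => simpa using W.zero_mem
    | h_add X Y hX hY =>
        rw [transpose_add]
        rw [show X + Y + (Xᵀ + Yᵀ) = (X + Xᵀ) + (Y + Yᵀ) by abel]
        exact W.add_mem hX hY
    | h_std_basis i j x =>
        rw [transpose_std]
        rw [show single i j x + single j i x = x • (Ee i j + Ee j i) by
          simp [Ee, smul_add]]
        exact W.smul_mem _ (hpair i j)
  intro T hT
  have hTt : Tᵀ = T := by ext i j; exact hT j i
  have h8 : T = (2:ℝ)⁻¹ • (T + Tᵀ) := by
    rw [hTt, ← two_smul ℝ T, smul_smul]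
    norm_num
  rw [h8]
  exact W.smul_mem _ (hsymmem T)

lemma decomp {M : Matrix ι ι ℂ} (hM : star M = -M) :
    ((Matrix.of fun i j => (M i j).re : Matrix ι ι ℝ))ᵀ
        = -(Matrix.of fun i j => (M i j).re : Matrix ι ι ℝ)
      ∧ (∀ i j, (M i j).im = (M j i).im)
      ∧ M = (Matrix.of fun i j => (M i j).re : Matrix ι ι ℝ).map Complex.ofReal
          + Complex.I • (Matrix.of fun i j => (M i j).im : Matrix ι ι ℝ).map Complex.ofReal := by
  have h : ∀ i j, (starRingEnd ℂ) (M j i) = -M i j := by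
    intro i j
    have := congrFun (congrFun hM i) j
    simpa [Matrix.star_apply] using this
  refine ⟨?_, ?_, ?_⟩
  · ext i j
    have := congrArg Complex.re (h i j)
    simpa using this
  · intro i j
    have := congrArg Complex.im (h j i)
    simp at this
    linarith
  · ext i j
    apply Complex.ext <;>
      simp [Matrix.add_apply, Matrix.map_apply, Matrix.smul_apply]

end IntermediateLieAux

open IntermediateLieAux

/-- For `n ≥ 2`, any real Lie subalgebra `𝔤` with
`𝔰𝔬(n) ⊕ iℝ·1 ⊆ 𝔤 ⊆ 𝔲(n)` equals `𝔰𝔬(n) ⊕ iℝ·1` or `𝔲(n)`.  Here `𝔲(n)` is the set of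
skew-Hermitian matrices and `𝔰𝔬(n) ⊕ iℝ·1` is the set of matrices `A + it·1` with `A` real
skew-symmetric, `t ∈ ℝ`. -/
theorem intermediate_lie_subalgebra_u_n (n : ℕ) (hn : 2 ≤ n)
    (g : Submodule ℝ (Matrix (Fin n) (Fin n) ℂ))
    (hbracket : ∀ X ∈ g, ∀ Y ∈ g, X * Y - Y * X ∈ g)
    (hsub : ∀ M ∈ g, star M = -M)
    (hcontains : ∀ (A : Matrix (Fin n) (Fin n) ℝ) (t : ℝ), Aᵀ = -A →
      A.map Complex.ofReal + (t • Complex.I) • (1 : Matrix (Fin n) (Fin n) ℂ) ∈ g) :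
    (g : Set (Matrix (Fin n) (Fin n) ℂ))
        = {M | ∃ (A : Matrix (Fin n) (Fin n) ℝ) (t : ℝ), Aᵀ = -A ∧
            M = A.map Complex.ofReal + (t • Complex.I) • (1 : Matrix (Fin n) (Fin n) ℂ)}
      ∨ (g : Set (Matrix (Fin n) (Fin n) ℂ)) = {M | star M = -M} := by
  have hnz : n ≠ 0 := by omega
  set i0 : Fin n := ⟨0, by omega⟩ with hi0
  by_cases hcase : ∀ M ∈ g, ∀ i j : Fin n, (M i j).im = if i = j then (M i0 i0).im else 0
  · left
    ext M
    simp only [SetLike.mem_coe, Set.mem_setOf_eq]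
    constructor
    · intro hMg
      obtain ⟨hskew, hsymm, hdec⟩ := decomp (hsub M hMg)
      refine ⟨Matrix.of fun i j => (M i j).re, (M i0 i0).im, hskew, ?_⟩
      ext i j
      have ht := hcase M hMg i j
      apply Complex.ext
      · rcases eq_or_ne i j with rfl | hij
        · simp [Matrix.add_apply, Matrix.map_apply, Matrix.smul_apply, Matrix.one_apply,
            Complex.real_smul]
        · simp [Matrix.add_apply, Matrix.map_apply, Matrix.smul_apply, Matrix.one_apply,
            Complex.real_smul, hij]
      · rcases eq_or_ne i j with rfl | hij
        · simp only [if_pos rfl] at ht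
          simp [Matrix.add_apply, Matrix.map_apply, Matrix.smul_apply, Matrix.one_apply,
            Complex.real_smul, ht]
        · simp only [if_neg hij] at ht
          simp [Matrix.add_apply, Matrix.map_apply, Matrix.smul_apply, Matrix.one_apply,
            Complex.real_smul, hij, ht]
    · rintro ⟨A, t, hA, rfl⟩
      exact hcontains A t hA
  · right
    push_neg at hcase
    obtain ⟨M, hMg, i, j, hij⟩ := hcase
    obtain ⟨hskew, hsymm, hdec⟩ := decomp (hsub M hMg)
    set Ar : Matrix (Fin n) (Fin n) ℝ := Matrix.of fun i j => (M i j).re with hAr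
    set S : Matrix (Fin n) (Fin n) ℝ := Matrix.of fun i j => (M i j).im with hS
    have hSW : S ∈ Wg g := by
      rw [mem_Wg]
      have heq : Complex.I • S.map Complex.ofReal = M - Ar.map Complex.ofReal := by
        rw [hdec]
        abel
      rw [heq]
      exact g.sub_mem hMg (skew_mem hcontains _ hskew)
    have hsymS : ∀ a b, S a b = S b a := fun a b => hsymm a b
    -- find suitable p, q
    have hmain : ∀ T : Matrix (Fin n) (Fin n) ℝ, (∀ a b, T a b = T b a) → T ∈ Wg g := by
      rcases eq_or_ne i j with rfl | hij'
      · rw [if_pos rfl] at hij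
        have hi0' : i ≠ i0 := by
          intro h
          rw [h] at hij
          exact hij rfl
        exact engine hi0' hbracket hcontains hSW
          (Or.inr (by simpa [hS] using hij))
      · rw [if_neg hij'] at hij
        refine engine hij' hbracket hcontains hSW (Or.inl ?_)
        have h1 : S i j = (M i j).im := rfl
        have h2 : S j i = (M i j).im := (hsymS j i).trans h1
        rw [h1, h2]
        intro h0
        apply hij
        linarith
    ext M'
    simp only [SetLike.mem_coe, Set.mem_setOf_eq]
    constructor
    · intro hMg'
      exact hsub M' hMg'
    · intro hM'
      obtain ⟨hskew', hsymm', hdec'⟩ := decomp hM'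
      rw [hdec']
      refine g.add_mem (skew_mem hcontains _ hskew') ?_
      have := hmain (Matrix.of fun a b => (M' a b).im) (fun a b => hsymm' a b)
      rwa [mem_Wg] at this
end

section
/- Let θ : A → A' be a morphism of Hopf algebras where A and A' are cosemisimple with Haar integrals h_A and h_{A'}. Then θ is injective if and only if h_{A'} ∘ θ = h_A. -/
open TensorProduct

/-- A Haar integral on a Hopf algebra `A` over `k`: a linear functional `h` with `h(1) = 1`
satisfying the left and right invariance conditions `(h ⊗ id)Δ(a) = h(a)·1 = (id ⊗ h)Δ(a)`. -/
def IsHaarIntegral (k : Type*) {A : Type*} [CommRing k] [Ring A] [HopfAlgebra k A]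
    (h : A →ₗ[k] k) : Prop :=
  h 1 = 1 ∧ ∀ a : A,
    (TensorProduct.lid k A) ((TensorProduct.map h LinearMap.id) (Coalgebra.comul a))
      = h a • (1 : A) ∧
    (TensorProduct.rid k A) ((TensorProduct.map LinearMap.id h) (Coalgebra.comul a))
      = h a • (1 : A)

/-- A submodule `D ⊆ A` is a subcoalgebra if `Δ(D) ⊆ D ⊗ D` (inside `A ⊗ A`). -/
def IsSubcoalgebra (k : Type*) {A : Type*} [CommRing k] [Ring A] [HopfAlgebra k A]
    (D : Submodule k A) : Prop :=
  ∀ a ∈ D, Coalgebra.comul (R := k) a ∈ LinearMap.range (TensorProduct.map D.subtype D.subtype)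

/-- A simple subcoalgebra: a nonzero subcoalgebra with no nontrivial proper subcoalgebras. -/
def IsSimpleSubcoalgebra (k : Type*) {A : Type*} [CommRing k] [Ring A] [HopfAlgebra k A]
    (D : Submodule k A) : Prop :=
  IsSubcoalgebra k D ∧ D ≠ ⊥ ∧
    ∀ E : Submodule k A, E ≤ D → IsSubcoalgebra k E → E = ⊥ ∨ E = D

/-- `A` is cosemisimple if it is the sum of its simple subcoalgebras. -/
def IsCosemisimple (k A : Type*) [CommRing k] [Ring A] [HopfAlgebra k A] : Prop :=
  sSup {D : Submodule k A | IsSimpleSubcoalgebra k D} = ⊤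

noncomputable section HaarAux
open Coalgebra HopfAlgebra
attribute [local instance] Classical.decEq

variable {k A : Type*} [Field k] [Ring A] [HopfAlgebra k A]

variable (k A) in
/-- Coordinates of a tensor `t : A ⊗ A` with respect to a basis of the left factor. -/
def coordEquiv : A ⊗[k] A ≃ₗ[k] ((Module.Basis.ofVectorSpaceIndex k A) →₀ A) :=
  (TensorProduct.congr (Module.Basis.ofVectorSpace k A).repr (LinearEquiv.refl k A)).trans
    (TensorProduct.finsuppScalarLeft k A _)

lemma coordEquiv_tmul (x m : A) (i) :
    coordEquiv k A (x ⊗ₜ[k] m) i = (Module.Basis.ofVectorSpace k A).repr x i • m := by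
  simp [coordEquiv]

lemma coordEquiv_basis_tmul (i) (m : A) :
    coordEquiv k A ((Module.Basis.ofVectorSpace k A) i ⊗ₜ[k] m) = Finsupp.single i m := by
  ext j
  rw [coordEquiv_tmul, Module.Basis.repr_self]
  by_cases hij : i = j <;> simp [Finsupp.single_apply, hij]

lemma coordEquiv_recon (t : A ⊗[k] A) :
    t = ∑ i ∈ (coordEquiv k A t).support,
      (Module.Basis.ofVectorSpace k A) i ⊗ₜ[k] (coordEquiv k A t i) := by
  apply (coordEquiv k A).injective
  rw [map_sum]
  rw [Finset.sum_congr rfl (fun i _ => coordEquiv_basis_tmul i (coordEquiv k A t i))]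
  exact (Finsupp.sum_single (coordEquiv k A t)).symm

lemma repr_rid_map (g : A →ₗ[k] k) (t : A ⊗[k] A) (i) :
    (Module.Basis.ofVectorSpace k A).repr
      (TensorProduct.rid k A (TensorProduct.map LinearMap.id g t)) i
      = g (coordEquiv k A t i) := by
  induction t with
  | zero => simp
  | add x y hx hy => simp only [map_add, Finsupp.add_apply, hx, hy]
  | tmul x m =>
      rw [coordEquiv_tmul]
      simp only [TensorProduct.map_tmul, LinearMap.id_coe, id_eq, TensorProduct.rid_tmul,
        map_smul, Finsupp.smul_apply, map_smul]
      simp [smul_eq_mul, mul_comm]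
lemma rid_map_mul_tmul_one (h : A →ₗ[k] k) (w : A) (t : A ⊗[k] A) :
    TensorProduct.rid k A (TensorProduct.map LinearMap.id h ((w ⊗ₜ[k] (1:A)) * t)) =
      w * TensorProduct.rid k A (TensorProduct.map LinearMap.id h t) := by
  induction t with
  | zero => simp
  | add x y hx hy => simp only [mul_add, map_add, hx, hy]
  | tmul p q => simp [Algebra.TensorProduct.tmul_mul_tmul, mul_smul_comm]

lemma rid_map_mulLeft (h : A →ₗ[k] k) (b : A) (t : A ⊗[k] A) :
    TensorProduct.rid k A (TensorProduct.map LinearMap.id (h ∘ₗ LinearMap.mulLeft k b) t) =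
      TensorProduct.rid k A (TensorProduct.map LinearMap.id h (((1:A) ⊗ₜ[k] b) * t)) := by
  induction t with
  | zero => simp
  | add x y hx hy => simp only [mul_add, map_add, hx, hy]
  | tmul p q => simp [Algebra.TensorProduct.tmul_mul_tmul]

/-- Main identity: if `h(c * x) = 0` for all `c`, then `∑ h(b * x₂) x₁ = 0`. -/
lemma rid_map_mulLeft_comul_eq_zero (h : A →ₗ[k] k)
    (hr : ∀ x : A, TensorProduct.rid k A (TensorProduct.map LinearMap.id h (comul x)) = h x • (1:A))
    (x : A) (hx : ∀ c : A, h (c * x) = 0) (b : A) :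
    TensorProduct.rid k A (TensorProduct.map LinearMap.id (h ∘ₗ LinearMap.mulLeft k b)
      (comul (R:=k) x)) = 0 := by
  set S : A →ₗ[k] A := antipode (R:=k)
  set F : A ⊗[k] A →ₗ[k] A :=
    (TensorProduct.rid k A).toLinearMap ∘ₗ TensorProduct.map LinearMap.id h
      ∘ₗ LinearMap.mulRight k (comul (R:=k) x) with hFdef
  have hF : ∀ t : A ⊗[k] A,
      F t = TensorProduct.rid k A (TensorProduct.map LinearMap.id h (t * comul (R:=k) x)) :=
    fun t => rfl
  rw [rid_map_mulLeft]
  rw [← hF]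
  -- rewrite 1 ⊗ₜ b
  have h1b : (1:A) ⊗ₜ[k] b =
      ((LinearMap.mul' k A ∘ₗ S.rTensor A).rTensor A)
        (((comul (R:=k) (A:=A)).rTensor A) (comul (R:=k) b)) := by
    rw [← LinearMap.rTensor_comp_apply]
    have hcomp : (LinearMap.mul' k A ∘ₗ S.rTensor A) ∘ₗ comul
        = (Algebra.linearMap k A) ∘ₗ counit := by
      rw [LinearMap.comp_assoc]; exact HopfAlgebra.mul_antipode_rTensor_comul
    rw [hcomp, LinearMap.rTensor_comp_apply, rTensor_counit_comul, LinearMap.rTensor_tmul]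
    simp
  rw [h1b]
  -- compatibility: F ∘ (μ(S⊗id)).rTensor = μ ∘ map S F ∘ assoc
  have hcompat : F ∘ₗ (LinearMap.mul' k A ∘ₗ S.rTensor A).rTensor A
      = LinearMap.mul' k A ∘ₗ TensorProduct.map S F
          ∘ₗ (TensorProduct.assoc k A A A).toLinearMap := by
    apply TensorProduct.ext_threefold
    intro p q z
    simp only [LinearMap.comp_apply, LinearMap.rTensor_tmul, LinearEquiv.coe_coe,
      TensorProduct.assoc_tmul, TensorProduct.map_tmul, LinearMap.mul'_apply]
    rw [hF]
    have : ((S p * q) ⊗ₜ[k] z) = ((S p) ⊗ₜ[k] (1:A)) * (q ⊗ₜ[k] z) := by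
      simp [Algebra.TensorProduct.tmul_mul_tmul]
    rw [this, mul_assoc, rid_map_mul_tmul_one]
    rw [hF]
  rw [← LinearMap.comp_apply, hcompat]
  simp only [LinearMap.comp_apply, LinearEquiv.coe_coe, coassoc_apply]
  -- now : μ (map S F ((comul.lTensor A) (comul b))) = 0
  have hzero : TensorProduct.map S F ∘ₗ (comul (R:=k) (A:=A)).lTensor A = 0 := by
    have hFc : F ∘ₗ (comul (R:=k) (A:=A)) = 0 := by
      apply LinearMap.ext; intro q
      simp only [LinearMap.comp_apply, LinearMap.zero_apply]
      rw [hF, ← Bialgebra.comul_mul, hr, hx, zero_smul]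
    have : TensorProduct.map S F ∘ₗ (comul (R:=k) (A:=A)).lTensor A
        = TensorProduct.map (S ∘ₗ LinearMap.id) (F ∘ₗ comul (R:=k)) := by
      rw [TensorProduct.map_comp]; rfl
    rw [this, hFc]
    apply TensorProduct.ext'
    intro u v
    simp
  rw [← LinearMap.comp_apply (TensorProduct.map S F), hzero]
  simp

/-- A normalized right-invariant functional has zero left kernel. -/
lemma haar_left_ker (h : A →ₗ[k] k) (h1 : h 1 = 1)
    (hr : ∀ x : A, TensorProduct.rid k A (TensorProduct.map LinearMap.id h (comul x)) = h x • (1:A))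
    (a : A) (ha : ∀ b : A, h (b * a) = 0) : a = 0 := by
  -- coordinates of comul of a kernel element are in the kernel
  have coord : ∀ x : A, (∀ b : A, h (b * x) = 0) → ∀ i b,
      h (b * coordEquiv k A (comul (R:=k) x) i) = 0 := by
    intro x hx i b
    have h0 := rid_map_mulLeft_comul_eq_zero h hr x hx b
    have h1' := repr_rid_map (h ∘ₗ LinearMap.mulLeft k b) (comul (R:=k) x) i
    rw [h0] at h1'
    simpa using h1'.symm
  -- counit vanishes on the kernel
  have eps : ∀ x : A, (∀ b : A, h (b * x) = 0) → counit (R:=k) x = 0 := by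
    intro x hx
    have hanti := HopfAlgebra.mul_antipode_rTensor_comul_apply (R:=k) x
    have hsum : algebraMap k A (counit (R:=k) x)
        = ∑ i ∈ (coordEquiv k A (comul (R:=k) x)).support,
            antipode (R:=k) ((Module.Basis.ofVectorSpace k A) i) *
              coordEquiv k A (comul (R:=k) x) i := by
      rw [← hanti]
      conv_lhs => rw [coordEquiv_recon (comul (R:=k) x)]
      rw [map_sum, map_sum]
      exact Finset.sum_congr rfl (fun i _ => by
        simp [LinearMap.rTensor_tmul, LinearMap.mul'_apply])
    have h2 : h (algebraMap k A (counit (R:=k) x)) = 0 := by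
      rw [hsum, map_sum]
      refine Finset.sum_eq_zero (fun i _ => ?_)
      exact coord x hx i (antipode (R:=k) ((Module.Basis.ofVectorSpace k A) i))
    rwa [Algebra.algebraMap_eq_smul_one, map_smul, h1, smul_eq_mul, mul_one] at h2
  -- finish via counit axiom
  have hcounit := lTensor_counit_comul (R:=k) a
  have ha2 : a = TensorProduct.rid k A ((counit (R:=k)).lTensor A (comul (R:=k) a)) := by
    rw [hcounit]; simp
  rw [ha2]
  conv_lhs => rw [coordEquiv_recon (comul (R:=k) a)]
  rw [map_sum, map_sum]
  refine Finset.sum_eq_zero (fun i _ => ?_)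
  have := eps _ (coord a ha i)
  simp [LinearMap.lTensor_tmul, this]

section Morphism
variable {A' : Type*} [Ring A'] [HopfAlgebra k A']

lemma swap_pairing (hA : A →ₗ[k] k) (h₂ : A →ₗ[k] k) (t : A ⊗[k] A) :
    hA (TensorProduct.rid k A (TensorProduct.map LinearMap.id h₂ t)) =
      h₂ (TensorProduct.lid k A (TensorProduct.map hA LinearMap.id t)) := by
  induction t with
  | zero => simp
  | add x y hx hy => simp only [map_add, hx, hy]
  | tmul x y => simp [mul_comm]

lemma theta_rid (hA' : A' →ₗ[k] k) (θ : A →ₐc[k] A') (t : A ⊗[k] A) :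
    θ (TensorProduct.rid k A (TensorProduct.map LinearMap.id (hA'.comp θ.toLinearMap) t)) =
      TensorProduct.rid k A' (TensorProduct.map LinearMap.id hA'
        (TensorProduct.map θ.toLinearMap θ.toLinearMap t)) := by
  induction t with
  | zero => simp
  | add x y hx hy => simp only [map_add, hx, hy]
  | tmul x y =>
      simp only [TensorProduct.map_tmul, TensorProduct.rid_tmul, LinearMap.id_coe, id_eq,
        map_smul, LinearMap.comp_apply]
      rfl

end Morphism
end HaarAux

/-- A morphism `θ : A → A'` of cosemisimple Hopf algebras, with Haar integrals
`h_A` and `h_{A'}`, is injective if and only if `h_{A'} ∘ θ = h_A`. -/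
theorem injective_iff_haar_comp {k A A' : Type*} [Field k] [Ring A] [Ring A']
    [HopfAlgebra k A] [HopfAlgebra k A']
    (hcs : IsCosemisimple k A) (hcs' : IsCosemisimple k A')
    (hA : A →ₗ[k] k) (hA' : A' →ₗ[k] k)
    (hHA : IsHaarIntegral k hA) (hHA' : IsHaarIntegral k hA')
    (θ : A →ₐc[k] A') :
    Function.Injective θ ↔ hA'.comp θ.toLinearMap = hA := by
  constructor
  · -- injective → Haar integrals are compatible
    intro hinj
    have h₂1 : (hA'.comp θ.toLinearMap) 1 = 1 := by
      have : θ.toLinearMap (1 : A) = 1 := map_one θ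
      rw [LinearMap.comp_apply, this, hHA'.1]
    have e2 : ∀ a : A, TensorProduct.rid k A
        (TensorProduct.map LinearMap.id (hA'.comp θ.toLinearMap) (Coalgebra.comul a))
          = (hA'.comp θ.toLinearMap) a • 1 := by
      intro a
      apply hinj
      have hcc : TensorProduct.map θ.toLinearMap θ.toLinearMap (Coalgebra.comul a)
          = Coalgebra.comul (θ a) := CoalgHomClass.map_comp_comul_apply θ a
      rw [theta_rid hA' θ (Coalgebra.comul a), hcc, (hHA'.2 (θ a)).2, map_smul, map_one]
      rfl
    apply LinearMap.ext
    intro a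
    have X : hA (TensorProduct.rid k A (TensorProduct.map LinearMap.id
        (hA'.comp θ.toLinearMap) (Coalgebra.comul a))) = (hA'.comp θ.toLinearMap) a := by
      rw [e2, map_smul, hHA.1, smul_eq_mul, mul_one]
    have Y : (hA'.comp θ.toLinearMap) (TensorProduct.lid k A
        (TensorProduct.map hA LinearMap.id (Coalgebra.comul a))) = hA a := by
      rw [(hHA.2 a).1, map_smul, h₂1, smul_eq_mul, mul_one]
    have hswap := swap_pairing hA (hA'.comp θ.toLinearMap) (Coalgebra.comul a)
    rw [X, Y] at hswap
    exact hswap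
  · -- compatibility → injective
    intro hc x y hxy
    have hz : θ (x - y) = 0 := by rw [map_sub, hxy, sub_self]
    have h0 : x - y = 0 := by
      refine haar_left_ker hA hHA.1 (fun z => (hHA.2 z).2) (x - y) (fun b => ?_)
      have : hA (b * (x - y)) = hA' (θ (b * (x - y))) := by rw [← hc]; rfl
      rw [this, map_mul, hz, mul_zero, map_zero]
    exact sub_eq_zero.mp h0
end

section
/- Short five lemma for cosemisimple Hopf algebras: given a commutative diagram of cosemisimple Hopf algebra maps with rows k → B →i A →π L → k and k → B →i' A' →π' L → k, where both rows are pre-exact (i, i' injective, π, π' surjective, i(B) = A^{co π} and i'(B) = A'^{co π'}), the identity on B and L, and a middle map θ : A → A' with θ∘i = i' and π'∘θ = π, the map θ is injective. -/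
open TensorProduct

/-- The coinvariant subalgebra `A^{co π} = {a ∈ A : (id ⊗ π)Δ(a) = a ⊗ 1}` of a Hopf algebra
map `π : A → L`. -/
def coinvariants {k A L : Type*} [CommRing k] [Ring A] [Ring L]
    [HopfAlgebra k A] [HopfAlgebra k L] (π : A →ₐc[k] L) : Set A :=
  {a : A | (TensorProduct.map LinearMap.id π.toLinearMap) (Coalgebra.comul a) = a ⊗ₜ[k] 1}

set_option synthInstance.maxHeartbeats 1000000
set_option maxHeartbeats 4000000

noncomputable section ShortFiveAux

namespace ShortFive

open LinearMap TensorProduct Coalgebra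

variable {k : Type*} [Field k]

/-! ### Contractions -/

section contr

variable {M N M' N' : Type*} [AddCommGroup M] [Module k M] [AddCommGroup N] [Module k N]
  [AddCommGroup M'] [Module k M'] [AddCommGroup N'] [Module k N']

/-- Contract the second tensor factor with a functional. -/
def cr (f : N →ₗ[k] k) : M ⊗[k] N →ₗ[k] M :=
  (TensorProduct.rid k M).toLinearMap ∘ₗ LinearMap.lTensor M f

/-- Contract the first tensor factor with a functional. -/
def cl (f : M →ₗ[k] k) : M ⊗[k] N →ₗ[k] N :=
  (TensorProduct.lid k N).toLinearMap ∘ₗ LinearMap.rTensor N f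

@[simp] lemma cr_tmul (f : N →ₗ[k] k) (x : M) (y : N) :
    cr f (x ⊗ₜ[k] y) = f y • x := by simp [cr]

@[simp] lemma cl_tmul (f : M →ₗ[k] k) (x : M) (y : N) :
    cl f (x ⊗ₜ[k] y) = f x • y := by simp [cl]

lemma cr_comp_lTensor (f : N' →ₗ[k] k) (g : N →ₗ[k] N') :
    (cr (M := M) f) ∘ₗ (LinearMap.lTensor M g) = cr (f ∘ₗ g) := by
  apply TensorProduct.ext'; intro x y; simp

lemma cr_natural (f : N →ₗ[k] k) (g : M →ₗ[k] M') (u : M ⊗[k] N) :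
    g (cr f u) = cr f ((LinearMap.rTensor N g) u) := by
  induction u using TensorProduct.induction_on with
  | zero => simp
  | tmul x y => simp
  | add u v hu hv => simp_all

lemma cr_cl_swap (f : M →ₗ[k] k) (f' : N →ₗ[k] k) (u : M ⊗[k] N) :
    f (cr f' u) = f' (cl f u) := by
  induction u using TensorProduct.induction_on with
  | zero => simp
  | tmul x y => simp [mul_comm]
  | add u v hu hv => simp_all

lemma cr_map (j : M' →ₗ[k] M) (j' : N' →ₗ[k] N) (φ : N →ₗ[k] k) (u : M' ⊗[k] N') :
    cr φ ((TensorProduct.map j j') u) = j (cr (φ ∘ₗ j') u) := by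
  induction u using TensorProduct.induction_on with
  | zero => simp
  | tmul x y => simp
  | add u v hu hv => simp_all

end contr


/-! ### Legs machinery -/

section legs

variable {ι : Type*} [DecidableEq ι] {M N M' N' : Type*} [AddCommGroup M] [Module k M]
  [AddCommGroup N] [Module k N] [AddCommGroup M'] [Module k M'] [AddCommGroup N'] [Module k N']

lemma repr_cl (𝒞 : Module.Basis ι k N) (f : M →ₗ[k] k) (u : M ⊗[k] N) (i : ι) :
    𝒞.repr (cl f u) i = f (TensorProduct.equivFinsuppOfBasisRight 𝒞 u i) := by
  induction u using TensorProduct.induction_on with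
  | zero => simp
  | tmul x y =>
      simp [TensorProduct.equivFinsuppOfBasisRight_apply_tmul_apply, map_smul,
        smul_eq_mul, mul_comm]
  | add u v hu hv => simp_all [map_add, Finsupp.add_apply]

lemma repr_cr (ℬ : Module.Basis ι k M) (f : N →ₗ[k] k) (u : M ⊗[k] N) (i : ι) :
    ℬ.repr (cr f u) i = f (TensorProduct.equivFinsuppOfBasisLeft ℬ u i) := by
  induction u using TensorProduct.induction_on with
  | zero => simp
  | tmul x y =>
      simp [TensorProduct.equivFinsuppOfBasisLeft_apply_tmul_apply, map_smul,
        smul_eq_mul, mul_comm]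
  | add u v hu hv => simp_all [map_add, Finsupp.add_apply]

lemma legsR_rTensor (𝒞 : Module.Basis ι k N) (f : M' →ₗ[k] M) (v : M' ⊗[k] N) (i : ι) :
    TensorProduct.equivFinsuppOfBasisRight 𝒞 ((f.rTensor N) v) i
      = f (TensorProduct.equivFinsuppOfBasisRight 𝒞 v i) := by
  induction v using TensorProduct.induction_on with
  | zero => simp
  | tmul x y => simp [TensorProduct.equivFinsuppOfBasisRight_apply_tmul_apply]
  | add u v hu hv => simp_all [map_add, Finsupp.add_apply]

lemma legsL_lTensor (ℬ : Module.Basis ι k M) (f : N' →ₗ[k] N) (v : M ⊗[k] N') (i : ι) :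
    TensorProduct.equivFinsuppOfBasisLeft ℬ ((f.lTensor M) v) i
      = f (TensorProduct.equivFinsuppOfBasisLeft ℬ v i) := by
  induction v using TensorProduct.induction_on with
  | zero => simp
  | tmul x y => simp [TensorProduct.equivFinsuppOfBasisLeft_apply_tmul_apply]
  | add u v hu hv => simp_all [map_add, Finsupp.add_apply]

lemma mem_range_rTensor_of_legs (𝒞 : Module.Basis ι k N) (D : Submodule k M) (u : M ⊗[k] N)
    (h : ∀ i, TensorProduct.equivFinsuppOfBasisRight 𝒞 u i ∈ D) :
    u ∈ LinearMap.range (D.subtype.rTensor N) := by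
  have hu : u = ((TensorProduct.equivFinsuppOfBasisRight 𝒞 u).sum fun i m => m ⊗ₜ[k] 𝒞 i) := by
    conv_lhs => rw [← (TensorProduct.equivFinsuppOfBasisRight 𝒞).symm_apply_apply u]
    rw [TensorProduct.equivFinsuppOfBasisRight_symm_apply]
  rw [hu]
  exact Submodule.finsuppSum_mem k _ _ _ fun i _ => ⟨(⟨_, h i⟩ : D) ⊗ₜ[k] 𝒞 i, by simp⟩

lemma mem_range_lTensor_of_legs (ℬ : Module.Basis ι k M) (E : Submodule k N) (u : M ⊗[k] N)
    (h : ∀ i, TensorProduct.equivFinsuppOfBasisLeft ℬ u i ∈ E) :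
    u ∈ LinearMap.range (E.subtype.lTensor M) := by
  have hu : u = ((TensorProduct.equivFinsuppOfBasisLeft ℬ u).sum fun i n => ℬ i ⊗ₜ[k] n) := by
    conv_lhs => rw [← (TensorProduct.equivFinsuppOfBasisLeft ℬ).symm_apply_apply u]
    rw [TensorProduct.equivFinsuppOfBasisLeft_symm_apply]
  rw [hu]
  exact Submodule.finsuppSum_mem k _ _ _ fun i _ => ⟨ℬ i ⊗ₜ[k] (⟨_, h i⟩ : E), by simp⟩

lemma legsR_of_mem_range (𝒞 : Module.Basis ι k N) (D : Submodule k M) (u : M ⊗[k] N)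
    (h : u ∈ LinearMap.range (D.subtype.rTensor N)) (i : ι) :
    TensorProduct.equivFinsuppOfBasisRight 𝒞 u i ∈ D := by
  obtain ⟨u₀, rfl⟩ := h
  rw [legsR_rTensor]
  exact (TensorProduct.equivFinsuppOfBasisRight 𝒞 u₀ i).2

lemma legsL_of_mem_range (ℬ : Module.Basis ι k M) (E : Submodule k N) (u : M ⊗[k] N)
    (h : u ∈ LinearMap.range (E.subtype.lTensor M)) (i : ι) :
    TensorProduct.equivFinsuppOfBasisLeft ℬ u i ∈ E := by
  obtain ⟨u₀, rfl⟩ := h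
  rw [legsL_lTensor]
  exact (TensorProduct.equivFinsuppOfBasisLeft ℬ u₀ i).2

lemma mem_range_map_of_mem_ranges {D : Submodule k M} {E : Submodule k N} {u : M ⊗[k] N}
    (hD : u ∈ LinearMap.range (D.subtype.rTensor N))
    (hE : u ∈ LinearMap.range (E.subtype.lTensor M)) :
    u ∈ LinearMap.range (TensorProduct.map D.subtype E.subtype) := by
  obtain ⟨q, hq⟩ := D.exists_isCompl
  set p : M →ₗ[k] D := D.projectionOnto q hq with hp
  have hps : (D.subtype ∘ₗ p) ∘ₗ D.subtype = D.subtype := by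
    ext x; simp [hp]
  obtain ⟨u₀, hu₀⟩ := hD
  have h1 : ((D.subtype ∘ₗ p).rTensor N) u = u := by
    rw [← hu₀, ← LinearMap.rTensor_comp_apply, hps]
  obtain ⟨w, hw⟩ := hE
  refine ⟨(TensorProduct.map p LinearMap.id) w, ?_⟩
  have h2 : (TensorProduct.map D.subtype E.subtype) ∘ₗ (TensorProduct.map p LinearMap.id)
      = (TensorProduct.map (D.subtype ∘ₗ p) E.subtype) := by
    rw [← TensorProduct.map_comp]; simp
  rw [← LinearMap.comp_apply, h2, ← LinearMap.rTensor_comp_lTensor,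
    LinearMap.comp_apply, hw, h1]

end legs


/-! ### Subcoalgebra lemmas -/

section subcoalg

variable {A : Type*} [Ring A] [HopfAlgebra k A]

lemma range_map_mono {D D' : Submodule k A} (h : D ≤ D') :
    LinearMap.range (TensorProduct.map D.subtype D.subtype)
      ≤ LinearMap.range (TensorProduct.map D'.subtype D'.subtype) := by
  have : D.subtype = D'.subtype ∘ₗ Submodule.inclusion h := rfl
  rw [this, TensorProduct.map_comp]
  exact fun u ⟨w, hw⟩ => ⟨(TensorProduct.map (Submodule.inclusion h) (Submodule.inclusion h)) w,
    by simpa using hw⟩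

lemma isSubcoalgebra_bot : IsSubcoalgebra k (⊥ : Submodule k A) := by
  intro a ha
  simp only [Submodule.mem_bot] at ha
  subst ha
  simp only [map_zero]
  exact Submodule.zero_mem _

lemma isSubcoalgebra_span_one : IsSubcoalgebra k (k ∙ (1 : A)) := by
  intro a ha
  obtain ⟨c, rfl⟩ := Submodule.mem_span_singleton.mp ha
  have h1 : (1 : A) ∈ k ∙ (1 : A) := Submodule.mem_span_singleton_self 1
  refine ⟨c • ((⟨1, h1⟩ : k ∙ (1 : A)) ⊗ₜ[k] (⟨1, h1⟩ : k ∙ (1 : A))), ?_⟩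
  rw [map_smul, map_smul]
  simp [TensorProduct.map_tmul, Bialgebra.comul_one, Algebra.TensorProduct.one_def]

lemma isSubcoalgebra_sup {D E : Submodule k A} (hD : IsSubcoalgebra k D)
    (hE : IsSubcoalgebra k E) : IsSubcoalgebra k (D ⊔ E) := by
  intro a ha
  obtain ⟨d, hd, e, he, rfl⟩ := Submodule.mem_sup.mp ha
  rw [map_add]
  exact Submodule.add_mem _
    (range_map_mono le_sup_left (hD d hd))
    (range_map_mono le_sup_right (hE e he))

lemma isSubcoalgebra_sSup_chain {S : Set (Submodule k A)} (hne : S.Nonempty)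
    (hdir : DirectedOn (· ≤ ·) S) (hS : ∀ F ∈ S, IsSubcoalgebra k F) :
    IsSubcoalgebra k (sSup S) := by
  intro a ha
  obtain ⟨F, hF, haF⟩ := (Submodule.mem_sSup_of_directed hne hdir).mp ha
  exact range_map_mono (le_sSup hF) (hS F hF a haF)

lemma range_map_le_rTensor {M N : Type*} [AddCommGroup M] [Module k M] [AddCommGroup N]
    [Module k N] (D : Submodule k M) (E : Submodule k N) :
    LinearMap.range (TensorProduct.map D.subtype E.subtype)
      ≤ LinearMap.range (D.subtype.rTensor N) := by
  rw [← LinearMap.rTensor_comp_lTensor]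
  exact fun u ⟨w, hw⟩ => ⟨(E.subtype.lTensor D) w, hw⟩

lemma range_map_le_lTensor {M N : Type*} [AddCommGroup M] [Module k M] [AddCommGroup N]
    [Module k N] (D : Submodule k M) (E : Submodule k N) :
    LinearMap.range (TensorProduct.map D.subtype E.subtype)
      ≤ LinearMap.range (E.subtype.lTensor M) := by
  rw [← LinearMap.lTensor_comp_rTensor]
  exact fun u ⟨w, hw⟩ => ⟨(D.subtype.rTensor E) w, hw⟩

lemma isSubcoalgebra_inf {D E : Submodule k A} (hD : IsSubcoalgebra k D)
    (hE : IsSubcoalgebra k E) : IsSubcoalgebra k (D ⊓ E) := by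
  classical
  intro a ha
  set b : Module.Basis _ k A := Module.Basis.ofVectorSpace k A
  set u := Coalgebra.comul (R := k) a with hu
  have hDu := hD a ha.1
  have hEu := hE a ha.2
  have hR : u ∈ LinearMap.range ((D ⊓ E).subtype.rTensor A) := by
    refine mem_range_rTensor_of_legs b _ u fun i => ⟨?_, ?_⟩
    · exact legsR_of_mem_range b D u (range_map_le_rTensor D D hDu) i
    · exact legsR_of_mem_range b E u (range_map_le_rTensor E E hEu) i
  have hL : u ∈ LinearMap.range ((D ⊓ E).subtype.lTensor A) := by
    refine mem_range_lTensor_of_legs b _ u fun i => ⟨?_, ?_⟩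
    · exact legsL_of_mem_range b D u (range_map_le_lTensor D D hDu) i
    · exact legsL_of_mem_range b E u (range_map_le_lTensor E E hEu) i
  exact mem_range_map_of_mem_ranges hR hL

end subcoalg

/-! ### Existence of Haar integrals -/

section haar

variable {A : Type*} [Ring A] [HopfAlgebra k A]

theorem exists_haar [Nontrivial A] (hcs : IsCosemisimple k A) :
    ∃ lam : A →ₗ[k] k, lam 1 = 1
      ∧ (∀ a : A, cr lam (Coalgebra.comul (R := k) a) = lam a • 1)
      ∧ (∀ a : A, cl lam (Coalgebra.comul (R := k) a) = lam a • 1) := by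
  classical
  set one : Submodule k A := k ∙ (1 : A) with hone
  set 𝒮 : Set (Submodule k A) := {F | IsSubcoalgebra k F ∧ F ⊓ one = ⊥} with hSdef
  have hbot : (⊥ : Submodule k A) ∈ 𝒮 := ⟨isSubcoalgebra_bot, bot_inf_eq _⟩
  have hchaincond : ∀ c ⊆ 𝒮, IsChain (· ≤ ·) c → ∀ y ∈ c, ∃ ub ∈ 𝒮, ∀ z ∈ c, z ≤ ub := by
    intro c hc hchain y hy
    refine ⟨sSup c, ⟨isSubcoalgebra_sSup_chain ⟨y, hy⟩ hchain.directedOn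
      (fun F hF => (hc hF).1), ?_⟩, fun z hz => le_sSup hz⟩
    rw [eq_bot_iff]
    rintro x ⟨hx1, hx2⟩
    obtain ⟨G, hG, hxG⟩ := (Submodule.mem_sSup_of_directed ⟨y, hy⟩ hchain.directedOn).mp hx1
    have : x ∈ G ⊓ one := ⟨hxG, hx2⟩
    rw [(hc hG).2] at this
    exact this
  obtain ⟨F, -, hFmax⟩ := zorn_le_nonempty₀ 𝒮 hchaincond ⊥ hbot
  obtain ⟨hFsub, hFone⟩ := hFmax.1
  -- `one` and `F` are complementary
  have hcompl : IsCompl one F := by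
    constructor
    · rw [disjoint_iff, inf_comm, hFone]
    · rw [codisjoint_iff, eq_top_iff, ← hcs]
      refine sSup_le fun D hD => ?_
      obtain ⟨hDsub, hDne, hDmin⟩ := hD
      have hsupsub : IsSubcoalgebra k (one ⊔ F) :=
        isSubcoalgebra_sup isSubcoalgebra_span_one hFsub
      have hGsub : IsSubcoalgebra k (D ⊓ (one ⊔ F)) := isSubcoalgebra_inf hDsub hsupsub
      rcases hDmin _ inf_le_left hGsub with hG | hG
      · -- the intersection is trivial; then `F ⊔ D ∈ 𝒮`, so `D ≤ F` by maximality
        have hFD : (F ⊔ D) ∈ 𝒮 := by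
          refine ⟨isSubcoalgebra_sup hFsub hDsub, ?_⟩
          rw [eq_bot_iff]
          rintro x ⟨hx1, hx2⟩
          obtain ⟨f, hf, d, hd, rfl⟩ := Submodule.mem_sup.mp hx1
          have hdmem : d ∈ D ⊓ (one ⊔ F) := by
            refine ⟨hd, ?_⟩
            have : (f + d) - f ∈ one ⊔ F :=
              Submodule.sub_mem _ (le_sup_left (a := one) hx2) (le_sup_right (b := F) hf)
            simpa using this
          rw [hG] at hdmem
          simp only [Submodule.mem_bot] at hdmem
          subst hdmem
          have : f ∈ F ⊓ one := ⟨hf, by simpa using hx2⟩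
          rw [hFone] at this
          simpa using this
        have hle : F ⊔ D ≤ F := hFmax.2 hFD le_sup_left
        exact le_trans (le_trans le_sup_right hle) le_sup_right
      · exact hG ▸ inf_le_right
  haveI : NoZeroSMulDivisors k A := by
    constructor
    intro c x hcx
    rcases eq_or_ne c 0 with h | h
    · exact Or.inl h
    · refine Or.inr ?_
      have := congrArg (fun y => c⁻¹ • y) hcx
      simpa [smul_smul, inv_mul_cancel₀ h] using this
  have h1ne : (1 : A) ≠ 0 := one_ne_zero
  set ψ := LinearEquiv.toSpanNonzeroSingleton k A 1 h1ne with hψ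
  set pr : A →ₗ[k] one := Submodule.projectionOnto one F hcompl with hpr
  set lam : A →ₗ[k] k := ψ.symm.toLinearMap ∘ₗ pr with hlam
  have h1mem : (1 : A) ∈ one := Submodule.mem_span_singleton_self 1
  have lam_one : lam 1 = 1 := by
    have h1 : pr 1 = ⟨1, h1mem⟩ :=
      Submodule.projectionOnto_apply_left hcompl ⟨1, h1mem⟩
    rw [hlam]
    simp only [LinearMap.coe_comp, Function.comp_apply, LinearEquiv.coe_coe, h1]
    rw [LinearEquiv.symm_apply_eq, LinearEquiv.toSpanNonzeroSingleton_one]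
  have lam_F : ∀ x ∈ F, lam x = 0 := by
    intro x hx
    rw [hlam]
    simp only [LinearMap.coe_comp, Function.comp_apply, LinearEquiv.coe_coe]
    rw [Submodule.projectionOnto_apply_of_mem_right hcompl hx, map_zero]
  have lam_smul_one : ∀ c : k, lam (c • 1) = c := by
    intro c; rw [map_smul, lam_one, smul_eq_mul, mul_one]
  -- invariance on the two pieces
  have invF : ∀ x ∈ F, (cr lam (Coalgebra.comul (R := k) x) = 0
      ∧ cl lam (Coalgebra.comul (R := k) x) = 0) := by
    intro x hx
    obtain ⟨w, hw⟩ := hFsub x hx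
    rw [← hw]
    have haux : ∀ w : F ⊗[k] F,
        cr lam ((TensorProduct.map F.subtype F.subtype) w) = 0
        ∧ cl lam ((TensorProduct.map F.subtype F.subtype) w) = 0 := by
      intro w
      induction w using TensorProduct.induction_on with
      | zero => simp
      | tmul p q => constructor <;> simp [lam_F _ q.2, lam_F _ p.2]
      | add u v hu hv =>
          rw [map_add, map_add, map_add, hu.1, hv.1, hu.2, hv.2]
          simp
    exact haux w
  have main : ∀ a : A, cr lam (Coalgebra.comul (R := k) a) = lam a • 1
      ∧ cl lam (Coalgebra.comul (R := k) a) = lam a • 1 := by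
    intro a
    have ha : a ∈ one ⊔ F := by
      rw [codisjoint_iff.mp hcompl.2]; trivial
    obtain ⟨y, hy, z, hz, rfl⟩ := Submodule.mem_sup.mp ha
    obtain ⟨c, rfl⟩ := Submodule.mem_span_singleton.mp hy
    have hcy : Coalgebra.comul (R := k) ((c • (1 : A)) + z)
        = c • ((1 : A) ⊗ₜ[k] (1 : A)) + Coalgebra.comul (R := k) z := by
      rw [map_add, map_smul, Bialgebra.comul_one, Algebra.TensorProduct.one_def]
    have hlamz : lam z = 0 := lam_F z hz
    have hrhs : lam (c • (1 : A) + z) • (1 : A) = c • 1 := by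
      rw [map_add, hlamz, add_zero, lam_smul_one]
    constructor
    · rw [hcy, map_add, map_smul, (invF z hz).1, add_zero, hrhs, cr_tmul, lam_one, one_smul]
    · rw [hcy, map_add, map_smul, (invF z hz).2, add_zero, hrhs, cl_tmul, lam_one, one_smul]
  exact ⟨lam, lam_one, fun a => (main a).1, fun a => (main a).2⟩

end haar

/-! ### Hopf computations -/

section hopf

variable {A : Type*} [Ring A] [HopfAlgebra k A]

lemma comul_cr_comul (f : A →ₗ[k] k) (a : A) :
    Coalgebra.comul (R := k) ((cr f) (Coalgebra.comul (R := k) a))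
      = (LinearMap.lTensor A ((cr f) ∘ₗ Coalgebra.comul)) (Coalgebra.comul (R := k) a) := by
  have h1 : ∀ u : A ⊗[k] A, Coalgebra.comul (R := k) (cr f u)
      = cr f (((Coalgebra.comul (R := k) (A := A)).rTensor A) u) := by
    intro u
    induction u using TensorProduct.induction_on with
    | zero => simp
    | tmul x y => simp
    | add u v hu hv => simp_all
  have h2 : ∀ v : A ⊗[k] (A ⊗[k] A),
      cr f ((TensorProduct.assoc k A A A).symm v) = (LinearMap.lTensor A (cr f)) v := by
    intro v
    induction v using TensorProduct.induction_on with
    | zero => rw [LinearEquiv.map_zero, map_zero, map_zero]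
    | tmul x w =>
        induction w using TensorProduct.induction_on with
        | zero => simp
        | tmul y z => rw [TensorProduct.assoc_symm_tmul]; simp [TensorProduct.tmul_smul]
        | add w1 w2 hw1 hw2 =>
            rw [TensorProduct.tmul_add, map_add, map_add, hw1, hw2, map_add]
    | add v1 v2 hv1 hv2 => simp_all
  rw [h1, ← Coalgebra.coassoc_symm_apply, h2, ← LinearMap.lTensor_comp_apply]

lemma lTensor_unit_comp {L' : Type*} [Ring L'] [Algebra k L'] (g : A →ₗ[k] k)
    (u : A ⊗[k] A) :
    (LinearMap.lTensor A ((Algebra.linearMap k L') ∘ₗ g)) u = (cr g u) ⊗ₜ[k] (1 : L') := by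
  induction u using TensorProduct.induction_on with
  | zero => simp
  | tmul x y =>
      simp only [LinearMap.lTensor_tmul, LinearMap.comp_apply, cr_tmul,
        Algebra.linearMap_apply, Algebra.algebraMap_eq_smul_one]
      rw [TensorProduct.tmul_smul, TensorProduct.smul_tmul']
  | add u v hu hv => rw [map_add, map_add, hu, hv, TensorProduct.add_tmul]

lemma cr_counit (a : A) : cr (Coalgebra.counit (R := k)) (Coalgebra.comul (R := k) a) = a := by
  have : (LinearMap.lTensor A (Coalgebra.counit (R := k))) (Coalgebra.comul (R := k) a)
      = a ⊗ₜ[k] (1 : k) := Coalgebra.lTensor_counit_comul a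
  simp [cr, this]

lemma cl_counit (a : A) : cl (Coalgebra.counit (R := k)) (Coalgebra.comul (R := k) a) = a := by
  have : ((Coalgebra.counit (R := k)).rTensor A) (Coalgebra.comul (R := k) a)
      = (1 : k) ⊗ₜ[k] a := Coalgebra.rTensor_counit_comul a
  simp [cl, this]

lemma cl_mul_one_right (f : A →ₗ[k] k) (t : A ⊗[k] A) (c : A) :
    (cl f t) * c = cl f (t * ((1 : A) ⊗ₜ[k] c)) := by
  induction t using TensorProduct.induction_on with
  | zero => simp
  | tmul x y =>
      rw [Algebra.TensorProduct.tmul_mul_tmul, mul_one, cl_tmul, cl_tmul, smul_mul_assoc]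
  | add u v hu hv => rw [map_add, add_mul, hu, hv, add_mul, map_add]

lemma cl_mul_tmul_one (f : A →ₗ[k] k) (t : A ⊗[k] A) (x : A) :
    cl f (t * (x ⊗ₜ[k] (1 : A))) = cl (f ∘ₗ LinearMap.mulRight k x) t := by
  induction t using TensorProduct.induction_on with
  | zero => simp
  | tmul y z =>
      rw [Algebra.TensorProduct.tmul_mul_tmul, mul_one, cl_tmul, cl_tmul]
      simp
  | add u v hu hv => rw [map_add, add_mul, map_add, hu, hv]

/-- The key exchange identity for a left-invariant functional. -/
lemma haar_identity (lam : A →ₗ[k] k)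
    (hl : ∀ a : A, cl lam (Coalgebra.comul (R := k) a) = lam a • 1) (a x : A) :
    cl (lam ∘ₗ LinearMap.mulRight k x) (Coalgebra.comul (R := k) a)
      = cl (lam ∘ₗ LinearMap.mulLeft k a)
          ((LinearMap.lTensor A (HopfAlgebra.antipode (R := k))) (Coalgebra.comul (R := k) x)) := by
  set S : A →ₗ[k] A := HopfAlgebra.antipode (R := k) with hSdef
  set δa : A ⊗[k] A := Coalgebra.comul (R := k) a with hδa
  set G : A →ₗ[k] A := cl lam ∘ₗ LinearMap.mulLeft k δa ∘ₗ Coalgebra.comul with hGdef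
  have hG : ∀ y : A, G y = lam (a * y) • 1 := by
    intro y
    have : G y = cl lam (Coalgebra.comul (R := k) (a * y)) := by
      rw [hGdef]
      simp only [LinearMap.comp_apply, LinearMap.mulLeft_apply]
      rw [Bialgebra.comul_mul]
    rw [this, hl]
  have hG' : G = (Algebra.linearMap k A) ∘ₗ (lam ∘ₗ LinearMap.mulLeft k a) := by
    ext y
    rw [hG y]
    simp [Algebra.algebraMap_eq_smul_one]
  have way1 : (LinearMap.mul' k A) ((TensorProduct.map G S) (Coalgebra.comul (R := k) x))
      = cl (lam ∘ₗ LinearMap.mulLeft k a)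
          ((LinearMap.lTensor A S) (Coalgebra.comul (R := k) x)) := by
    rw [hG']
    have haux : ∀ u : A ⊗[k] A,
        (LinearMap.mul' k A)
          ((TensorProduct.map ((Algebra.linearMap k A) ∘ₗ (lam ∘ₗ LinearMap.mulLeft k a)) S) u)
        = cl (lam ∘ₗ LinearMap.mulLeft k a) ((LinearMap.lTensor A S) u) := by
      intro u
      induction u using TensorProduct.induction_on with
      | zero => simp
      | tmul y z =>
          simp only [TensorProduct.map_tmul, LinearMap.mul'_apply, LinearMap.comp_apply,
            LinearMap.lTensor_tmul, cl_tmul, LinearMap.mulLeft_apply, Algebra.linearMap_apply]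
          rw [← Algebra.smul_def]
      | add u v hu hv => rw [map_add, map_add, map_add, map_add, hu, hv]
    exact haux _
  have st1 : (TensorProduct.map G S) (Coalgebra.comul (R := k) x)
      = (TensorProduct.map (cl lam ∘ₗ LinearMap.mulLeft k δa) S)
          (((Coalgebra.comul (R := k) (A := A)).rTensor A) (Coalgebra.comul (R := k) x)) := by
    have heq : (TensorProduct.map (cl lam ∘ₗ LinearMap.mulLeft k δa) S) ∘ₗ
        ((Coalgebra.comul (R := k) (A := A)).rTensor A)
        = TensorProduct.map G S := by
      have hrT : ((Coalgebra.comul (R := k) (A := A)).rTensor A)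
          = TensorProduct.map (Coalgebra.comul (R := k) (A := A)) LinearMap.id := rfl
      rw [hrT, ← TensorProduct.map_comp, hGdef, LinearMap.comp_id, LinearMap.comp_assoc]
    rw [← heq, LinearMap.comp_apply]
  have st3 : ∀ v : A ⊗[k] (A ⊗[k] A),
      (LinearMap.mul' k A) ((TensorProduct.map (cl lam ∘ₗ LinearMap.mulLeft k δa) S)
        ((TensorProduct.assoc k A A A).symm v))
      = cl lam (δa * ((LinearMap.lTensor A ((LinearMap.mul' k A) ∘ₗ (LinearMap.lTensor A S))) v)) := by
    intro v
    induction v using TensorProduct.induction_on with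
    | zero => rw [LinearEquiv.map_zero, map_zero, map_zero, map_zero, mul_zero, map_zero]
    | tmul y w =>
        induction w using TensorProduct.induction_on with
        | zero =>
            rw [TensorProduct.tmul_zero, LinearEquiv.map_zero, map_zero, map_zero, map_zero,
              mul_zero, map_zero]
        | tmul z w' =>
            rw [TensorProduct.assoc_symm_tmul]
            simp only [TensorProduct.map_tmul, LinearMap.mul'_apply, LinearMap.comp_apply,
              LinearMap.lTensor_tmul, LinearMap.mulLeft_apply]
            rw [cl_mul_one_right lam (δa * (y ⊗ₜ[k] z)) (S w'), mul_assoc]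
            congr 2
            rw [Algebra.TensorProduct.tmul_mul_tmul, mul_one]
        | add w1 w2 hw1 hw2 =>
            rw [TensorProduct.tmul_add, map_add, map_add, map_add, map_add, hw1, hw2,
              mul_add, map_add]
    | add v1 v2 hv1 hv2 =>
        rw [map_add, map_add, map_add, map_add, hv1, hv2, mul_add, map_add]
  have key : (LinearMap.mul' k A) ((TensorProduct.map G S) (Coalgebra.comul (R := k) x))
      = cl (lam ∘ₗ LinearMap.mulRight k x) δa := by
    rw [st1, ← Coalgebra.coassoc_symm_apply, st3, ← LinearMap.lTensor_comp_apply,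
      LinearMap.comp_assoc, hSdef, HopfAlgebra.mul_antipode_lTensor_comul,
      lTensor_unit_comp, cr_counit]
    exact cl_mul_tmul_one lam δa x
  rw [← key, way1]

/-- Faithfulness of a normalized two-sided-invariant functional (only left invariance used). -/
lemma haar_faithful (lam : A →ₗ[k] k) (hone : lam 1 = 1)
    (hl : ∀ a : A, cl lam (Coalgebra.comul (R := k) a) = lam a • 1)
    (a : A) (ha : ∀ x : A, lam (a * x) = 0) : a = 0 := by
  classical
  set N : Submodule k A := ⨅ x : A, LinearMap.ker (lam ∘ₗ LinearMap.mulRight k x) with hN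
  have hmemN : ∀ y : A, y ∈ N ↔ ∀ x : A, lam (y * x) = 0 := by
    intro y
    simp [hN, Submodule.mem_iInf, LinearMap.mem_ker]
  set b : Module.Basis _ k A := Module.Basis.ofVectorSpace k A with hb
  have hstep1 : ∀ y ∈ N, Coalgebra.comul (R := k) y
      ∈ LinearMap.range (N.subtype.rTensor A) := by
    intro y hy
    refine mem_range_rTensor_of_legs b N _ fun i => ?_
    rw [hmemN]
    intro x
    have h5 := haar_identity lam hl y x
    have hzero : (lam ∘ₗ LinearMap.mulLeft k y) = (0 : A →ₗ[k] k) := by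
      ext z
      simpa using (hmemN y).mp hy z
    rw [hzero] at h5
    have hcl0 : cl (0 : A →ₗ[k] k)
        ((LinearMap.lTensor A (HopfAlgebra.antipode (R := k)))
          (Coalgebra.comul (R := k) x)) = 0 := by
      simp [cl]
    rw [hcl0] at h5
    have hco := repr_cl b (lam ∘ₗ LinearMap.mulRight k x) (Coalgebra.comul (R := k) y) i
    rw [h5] at hco
    simpa using hco.symm
  have hstep2 : ∀ y ∈ N, Coalgebra.counit (R := k) y = 0 := by
    intro y hy
    obtain ⟨u₀, hu₀⟩ := hstep1 y hy
    have haux : ∀ u : N ⊗[k] A, ∀ x : A,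
        lam ((LinearMap.mul' k A) ((LinearMap.lTensor A (HopfAlgebra.antipode (R := k)))
          ((N.subtype.rTensor A) u)) * x) = 0 := by
      intro u
      induction u using TensorProduct.induction_on with
      | zero => intro x; simp
      | tmul n z =>
          intro x
          simp only [LinearMap.rTensor_tmul, LinearMap.lTensor_tmul, LinearMap.mul'_apply,
            Submodule.coe_subtype]
          rw [mul_assoc]
          exact (hmemN _).mp n.2 _
      | add u v hu hv =>
          intro x
          rw [map_add, map_add, map_add, add_mul, map_add, hu x, hv x, add_zero]
    have hae : algebraMap k A (Coalgebra.counit (R := k) y)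
        = (LinearMap.mul' k A) ((LinearMap.lTensor A (HopfAlgebra.antipode (R := k)))
            (Coalgebra.comul (R := k) y)) :=
      (HopfAlgebra.mul_antipode_lTensor_comul_apply y).symm
    have hfin := haux u₀ 1
    rw [hu₀, ← hae, mul_one] at hfin
    rw [Algebra.algebraMap_eq_smul_one, map_smul, hone, smul_eq_mul, mul_one] at hfin
    exact hfin
  have hstep3 : ∀ y ∈ N, y = 0 := by
    intro y hy
    obtain ⟨u₀, hu₀⟩ := hstep1 y hy
    have hcc : cl (Coalgebra.counit (R := k)) (Coalgebra.comul (R := k) y) = y := cl_counit y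
    rw [← hu₀] at hcc
    have haux : ∀ u : N ⊗[k] A, cl (Coalgebra.counit (R := k)) ((N.subtype.rTensor A) u) = 0 := by
      intro u
      induction u using TensorProduct.induction_on with
      | zero => simp
      | tmul n z =>
          simp only [LinearMap.rTensor_tmul, cl_tmul, Submodule.coe_subtype]
          rw [hstep2 _ n.2, zero_smul]
      | add u v hu hv => rw [map_add, map_add, hu, hv, add_zero]
    rw [haux u₀] at hcc
    exact hcc.symm
  exact hstep3 a ((hmemN a).mpr ha)

end hopf

/-! ### Conditional expectation -/

section expectation

variable {A A' L : Type*} [Ring A] [HopfAlgebra k A] [Ring A'] [HopfAlgebra k A']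
  [Ring L] [HopfAlgebra k L]

/-- The conditional expectation associated to `π` and an invariant functional. -/
def expect (π : A →ₐc[k] L) (lamL : L →ₗ[k] k) : A →ₗ[k] A :=
  cr (lamL ∘ₗ π.toLinearMap) ∘ₗ Coalgebra.comul

lemma expect_apply (π : A →ₐc[k] L) (lamL : L →ₗ[k] k) (a : A) :
    expect π lamL a = cr (lamL ∘ₗ π.toLinearMap) (Coalgebra.comul (R := k) a) := rfl

lemma map_pipi_comul (π : A →ₐc[k] L) (a : A) :
    (TensorProduct.map π.toLinearMap π.toLinearMap) (Coalgebra.comul (R := k) a)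
      = Coalgebra.comul (R := k) (π a) :=
  CoalgHomClass.map_comp_comul_apply π a

lemma pi_expect (π : A →ₐc[k] L) (lamL : L →ₗ[k] k)
    (hLr : ∀ x : L, cr lamL (Coalgebra.comul (R := k) x) = lamL x • 1) (a : A) :
    π (expect π lamL a) = lamL (π a) • 1 := by
  have e1 : expect π lamL a
      = cr lamL ((LinearMap.lTensor A π.toLinearMap) (Coalgebra.comul (R := k) a)) := by
    rw [expect_apply, ← cr_comp_lTensor, LinearMap.comp_apply]
  have e2 : π.toLinearMap (expect π lamL a)
      = cr lamL ((π.toLinearMap.rTensor L)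
          ((LinearMap.lTensor A π.toLinearMap) (Coalgebra.comul (R := k) a))) := by
    rw [e1]
    exact cr_natural lamL π.toLinearMap _
  have e3 : π (expect π lamL a) = π.toLinearMap (expect π lamL a) := rfl
  have e4 : (π.toLinearMap.rTensor L) ((LinearMap.lTensor A π.toLinearMap)
        (Coalgebra.comul (R := k) a))
      = TensorProduct.map π.toLinearMap π.toLinearMap (Coalgebra.comul (R := k) a) := by
    rw [← LinearMap.comp_apply, LinearMap.rTensor_comp_lTensor]
  rw [e3, e2, e4, map_pipi_comul]
  exact hLr (π a)

lemma expect_coinvariant (π : A →ₐc[k] L) (lamL : L →ₗ[k] k)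
    (hLr : ∀ x : L, cr lamL (Coalgebra.comul (R := k) x) = lamL x • 1) (a : A) :
    (TensorProduct.map LinearMap.id π.toLinearMap)
        (Coalgebra.comul (R := k) (expect π lamL a))
      = (expect π lamL a) ⊗ₜ[k] (1 : L) := by
  have e0 : Coalgebra.comul (R := k) (expect π lamL a)
      = (LinearMap.lTensor A (expect π lamL)) (Coalgebra.comul (R := k) a) :=
    comul_cr_comul (lamL ∘ₗ π.toLinearMap) a
  rw [e0, ← LinearMap.comp_apply]
  have e1 : (TensorProduct.map LinearMap.id π.toLinearMap) ∘ₗ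
        (LinearMap.lTensor A (expect π lamL))
      = LinearMap.lTensor A (π.toLinearMap ∘ₗ expect π lamL) := by
    have h0 : (TensorProduct.map (LinearMap.id : A →ₗ[k] A) π.toLinearMap)
        = LinearMap.lTensor A π.toLinearMap := rfl
    rw [h0, ← LinearMap.lTensor_comp]
  rw [e1]
  have e2 : π.toLinearMap ∘ₗ expect π lamL
      = (Algebra.linearMap k L) ∘ₗ (lamL ∘ₗ π.toLinearMap) := by
    ext z
    simp only [LinearMap.comp_apply, Algebra.linearMap_apply, Algebra.algebraMap_eq_smul_one]
    have := pi_expect π lamL hLr z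
    exact this
  rw [e2, lTensor_unit_comp]
  rfl

lemma theta_expect (θ : A →ₐc[k] A') (π : A →ₐc[k] L) (π' : A' →ₐc[k] L)
    (lamL : L →ₗ[k] k) (hπθ : ∀ a : A, π' (θ a) = π a) (a : A) :
    θ (expect π lamL a) = expect π' lamL (θ a) := by
  have e1 : θ.toLinearMap (expect π lamL a)
      = cr (lamL ∘ₗ π.toLinearMap) ((θ.toLinearMap.rTensor A) (Coalgebra.comul (R := k) a)) :=
    cr_natural _ _ _
  have e2 : lamL ∘ₗ π.toLinearMap = (lamL ∘ₗ π'.toLinearMap) ∘ₗ θ.toLinearMap := by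
    ext z
    exact congrArg lamL (hπθ z).symm
  have e3 : θ (expect π lamL a) = θ.toLinearMap (expect π lamL a) := rfl
  have e4 : (LinearMap.lTensor A' θ.toLinearMap) ((θ.toLinearMap.rTensor A)
        (Coalgebra.comul (R := k) a))
      = TensorProduct.map θ.toLinearMap θ.toLinearMap (Coalgebra.comul (R := k) a) := by
    rw [← LinearMap.comp_apply, LinearMap.lTensor_comp_rTensor]
  rw [e3, e1, e2, ← cr_comp_lTensor, LinearMap.comp_apply, e4, map_pipi_comul]
  rfl

end expectation

end ShortFive
end ShortFiveAux

/-- Short five lemma for cosemisimple Hopf algebras.  Given pre-exact rows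
`k → B → A → L → k` and `k → B → A' → L → k` (with `i, i'` injective, `π, π'` surjective and
`i(B) = A^{co π}`, `i'(B) = A'^{co π'}`) and a compatible middle map `θ : A → A'`, the map `θ`
is injective. -/
theorem short_five_lemma_cosemisimple {k B A A' L : Type*} [Field k]
    [Ring B] [Ring A] [Ring A'] [Ring L]
    [HopfAlgebra k B] [HopfAlgebra k A] [HopfAlgebra k A'] [HopfAlgebra k L]
    (hcsB : IsCosemisimple k B) (hcsA : IsCosemisimple k A)
    (hcsA' : IsCosemisimple k A') (hcsL : IsCosemisimple k L)
    (i : B →ₐc[k] A) (i' : B →ₐc[k] A')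
    (π : A →ₐc[k] L) (π' : A' →ₐc[k] L) (θ : A →ₐc[k] A')
    (hi : Function.Injective i) (hi' : Function.Injective i')
    (hπ : Function.Surjective π) (hπ' : Function.Surjective π')
    (hco : Set.range i = coinvariants π) (hco' : Set.range i' = coinvariants π')
    (hθi : ∀ b : B, θ (i b) = i' b) (hπθ : ∀ a : A, π' (θ a) = π a) :
    Function.Injective θ := by
  classical
  by_cases hAtriv : Subsingleton A
  · exact fun a b _ => Subsingleton.elim a b
  haveI : Nontrivial A := not_subsingleton_iff_nontrivial.mp hAtriv
  by_cases hLtriv : Subsingleton L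
  · -- degenerate case: `L = 0`, so everything is coinvariant and `i` is onto
    have hsub : ∀ u : A ⊗[k] L, u = 0 := by
      intro u
      induction u using TensorProduct.induction_on with
      | zero => rfl
      | tmul x y => rw [Subsingleton.elim y (0 : L), TensorProduct.tmul_zero]
      | add u v hu hv => rw [hu, hv, add_zero]
    have hall : ∀ a : A, a ∈ coinvariants π := by
      intro a
      show (TensorProduct.map LinearMap.id π.toLinearMap) (Coalgebra.comul a) = a ⊗ₜ[k] 1
      rw [hsub ((TensorProduct.map LinearMap.id π.toLinearMap) (Coalgebra.comul a)),
        hsub (a ⊗ₜ[k] 1)]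
    intro x y hxy
    obtain ⟨bx, hbx⟩ : x ∈ Set.range ⇑i := by rw [hco]; exact hall x
    obtain ⟨byy, hbyy⟩ : y ∈ Set.range ⇑i := by rw [hco]; exact hall y
    rw [← hbx, ← hbyy] at hxy ⊢
    rw [hθi bx, hθi byy] at hxy
    rw [hi' hxy]
  haveI : Nontrivial L := not_subsingleton_iff_nontrivial.mp hLtriv
  haveI : Nontrivial B := by
    refine nontrivial_of_ne 1 0 fun h10 => ?_
    refine one_ne_zero (α := A) ?_
    rw [← map_one i, h10, map_zero]
  obtain ⟨lamB, hB1, hBr, hBl⟩ := ShortFive.exists_haar (k := k) (A := B) hcsB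
  obtain ⟨lamA, hA1, hAr, hAl⟩ := ShortFive.exists_haar (k := k) (A := A) hcsA
  obtain ⟨lamL, hL1, hLr, hLl⟩ := ShortFive.exists_haar (k := k) (A := L) hcsL
  set P : A →ₗ[k] A := ShortFive.expect π lamL with hPdef
  have hii : Function.Injective ⇑(i.toLinearMap) := fun x y hxy => hi hxy
  set e : B ≃ₗ[k] LinearMap.range i.toLinearMap := LinearEquiv.ofInjective i.toLinearMap hii
    with hedef
  have hPrange : ∀ a : A, P a ∈ LinearMap.range i.toLinearMap := by
    intro a
    have h1 : P a ∈ Set.range ⇑i := by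
      rw [hco]
      exact ShortFive.expect_coinvariant π lamL hLr a
    obtain ⟨b0, hb0⟩ := h1
    exact ⟨b0, hb0⟩
  set g : A →ₗ[k] B := e.symm.toLinearMap ∘ₗ
      (P.codRestrict (LinearMap.range i.toLinearMap) hPrange) with hgdef
  have hig : ∀ a : A, i (g a) = P a := by
    intro a
    have h1 : (P.codRestrict (LinearMap.range i.toLinearMap) hPrange) a = e (g a) := by
      rw [hgdef]
      show _ = e (e.symm _)
      rw [e.apply_symm_apply]
    have h2 : (P a : A) = ↑(e (g a)) := congrArg Subtype.val h1
    rw [LinearEquiv.ofInjective_apply] at h2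
    exact h2.symm
  set h : A →ₗ[k] k := lamB ∘ₗ g with hhdef
  have hP1 : P (1 : A) = 1 := by
    have c1 : Coalgebra.comul (R := k) (1 : A) = (1 : A) ⊗ₜ[k] (1 : A) := by
      rw [Bialgebra.comul_one, Algebra.TensorProduct.one_def]
    rw [hPdef, ShortFive.expect_apply, c1, ShortFive.cr_tmul]
    have : (lamL ∘ₗ π.toLinearMap) (1 : A) = 1 := by
      show lamL (π 1) = 1
      rw [map_one π, hL1]
    rw [this, one_smul]
  have hg1 : g (1 : A) = 1 := by
    apply hi
    rw [hig, hP1, map_one]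
  have hh1 : h (1 : A) = 1 := by
    show lamB (g 1) = 1
    rw [hg1, hB1]
  obtain ⟨q, hq⟩ := (LinearMap.range i.toLinearMap).exists_isCompl
  set φ : A →ₗ[k] k := lamB ∘ₗ e.symm.toLinearMap ∘ₗ
      Submodule.projectionOnto _ q hq with hφdef
  have hφi : ∀ b0 : B, φ (i b0) = lamB b0 := by
    intro b0
    have h2 : i b0 = ↑(e b0) := (LinearEquiv.ofInjective_apply (f := i.toLinearMap) (h := hii) b0).symm
    have h1 : (Submodule.projectionOnto _ q hq) (i b0) = e b0 := by
      rw [h2]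
      exact Submodule.projectionOnto_apply_left hq (e b0)
    show lamB (e.symm ((Submodule.projectionOnto _ q hq) (i b0))) = lamB b0
    rw [h1, e.symm_apply_apply]
  have hφPl : φ ∘ₗ P = h := by
    ext z
    show φ (P z) = lamB (g z)
    rw [← hig z, hφi]
  have hhr : ∀ a : A, ShortFive.cr h (Coalgebra.comul (R := k) a) = h a • 1 := by
    intro a
    have hc : Coalgebra.comul (R := k) (P a)
        = (LinearMap.lTensor A P) (Coalgebra.comul (R := k) a) :=
      ShortFive.comul_cr_comul (lamL ∘ₗ π.toLinearMap) a
    have e1 : ShortFive.cr φ (Coalgebra.comul (R := k) (P a))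
        = ShortFive.cr h (Coalgebra.comul (R := k) a) := by
      rw [hc]
      have h3 : ShortFive.cr φ ((LinearMap.lTensor A P) (Coalgebra.comul (R := k) a))
          = (ShortFive.cr φ ∘ₗ LinearMap.lTensor A P) (Coalgebra.comul (R := k) a) := rfl
      rw [h3, ShortFive.cr_comp_lTensor, hφPl]
    have e2 : Coalgebra.comul (R := k) (P a)
        = (TensorProduct.map i.toLinearMap i.toLinearMap)
            (Coalgebra.comul (R := k) (g a)) := by
      rw [ShortFive.map_pipi_comul i (g a), hig a]
    rw [← e1, e2, ShortFive.cr_map]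
    have e3 : φ ∘ₗ i.toLinearMap = lamB := by
      ext b0
      exact hφi b0
    rw [e3, hBr (g a), map_smul]
    have e4 : i.toLinearMap (1 : B) = (1 : A) := map_one i
    rw [e4]
    rfl
  have hhA : ∀ z : A, h z = lamA z := by
    intro z
    have h1 : lamA (ShortFive.cr h (Coalgebra.comul (R := k) z)) = h z := by
      rw [hhr z, map_smul, hA1, smul_eq_mul, mul_one]
    have h2 : h (ShortFive.cl lamA (Coalgebra.comul (R := k) z)) = lamA z := by
      rw [hAl z, map_smul, hh1, smul_eq_mul, mul_one]
    rw [← h1, ShortFive.cr_cl_swap, h2]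
  have hker : ∀ a : A, θ a = 0 → a = 0 := by
    intro a hza
    refine ShortFive.haar_faithful lamA hA1 hAl a fun x => ?_
    rw [← hhA (a * x)]
    have hg0 : g (a * x) = 0 := by
      apply hi'
      rw [map_zero, ← hθi (g (a * x)), hig (a * x), hPdef,
        ShortFive.theta_expect θ π π' lamL hπθ (a * x), map_mul, hza, zero_mul, map_zero]
    show lamB (g (a * x)) = 0
    rw [hg0, map_zero]
  intro x y hxy
  have h0 : θ (x - y) = 0 := by rw [map_sub, hxy, sub_self]
  exact sub_eq_zero.mp (hker _ h0)
end

section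
/- Let A be a Hopf *-algebra generated by self-adjoint elements u_{ij} (1 ≤ i,j ≤ n) with Δ(u_{ij}) = Σ_k u_{ik} ⊗ u_{kj}, and suppose there is a surjective Hopf *-algebra map p : A → ℂ[ℤ/2], u_{ij} ↦ δ_{ij} g where g is the generator of ℤ/2. Let PA ⊆ A be the subalgebra generated by all products u_{ij}u_{kl}. Then the coinvariant subalgebra A^{co p} := {a ∈ A : (id ⊗ p)Δ(a) = a ⊗ 1} equals PA; in particular the sequence ℂ → PA → A → ℂ[ℤ/2] → ℂ is pre-exact. -/
open TensorProduct

/-- The comultiplication of the group algebra `ℂ[ℤ/2]`, determined by `Δ(g^m) = g^m ⊗ g^m`. -/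
noncomputable def comulZ2 :
    MonoidAlgebra ℂ (Multiplicative (ZMod 2)) →ₗ[ℂ]
      MonoidAlgebra ℂ (Multiplicative (ZMod 2)) ⊗[ℂ] MonoidAlgebra ℂ (Multiplicative (ZMod 2)) :=
  (Finsupp.lsum ℂ fun g => LinearMap.toSpanSingleton ℂ _
    (MonoidAlgebra.of ℂ (Multiplicative (ZMod 2)) g ⊗ₜ[ℂ]
      MonoidAlgebra.of ℂ (Multiplicative (ZMod 2)) g)) ∘ₗ
    (MonoidAlgebra.coeffLinearEquiv ℂ).toLinearMap

/-- Let `A` be a Hopf `*`-algebra generated by self-adjoint elements `u i j` with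
`Δ(u_{ij}) = Σ_k u_{ik} ⊗ u_{kj}`, and let `p : A → ℂ[ℤ/2]` be a surjective Hopf algebra map
with `p(u_{ij}) = δ_{ij} g`.  Then the coinvariant subalgebra
`A^{co p} = {a : (id ⊗ p)Δ(a) = a ⊗ 1}` equals the subalgebra `PA` generated by the products
`u_{ij} u_{kl}`; in particular the sequence `ℂ → PA → A → ℂ[ℤ/2] → ℂ` is pre-exact. -/
theorem coinvariants_eq_projective_version (n : ℕ) (A : Type*) [Ring A] [HopfAlgebra ℂ A]
    [StarRing A]
    (u : Fin n → Fin n → A)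
    (hstar : ∀ i j, star (u i j) = u i j)
    (hcomul : ∀ i j, Coalgebra.comul (R := ℂ) (u i j) = ∑ k, u i k ⊗ₜ[ℂ] u k j)
    (hgen : Algebra.adjoin ℂ {x : A | ∃ i j, x = u i j} = ⊤)
    (p : A →ₐ[ℂ] MonoidAlgebra ℂ (Multiplicative (ZMod 2)))
    (hpcomul : ∀ a : A,
      (TensorProduct.map p.toLinearMap p.toLinearMap) (Coalgebra.comul a) = comulZ2 (p a))
    (hsurj : Function.Surjective p)
    (hp : ∀ i j, p (u i j) = if i = j then
      MonoidAlgebra.of ℂ (Multiplicative (ZMod 2)) (Multiplicative.ofAdd 1) else 0) :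
    {a : A | (TensorProduct.map LinearMap.id p.toLinearMap) (Coalgebra.comul a) = a ⊗ₜ[ℂ] 1}
      = (Algebra.adjoin ℂ {x : A | ∃ i j k l, x = u i j * u k l} : Set A) := by
  classical
  set K := MonoidAlgebra ℂ (Multiplicative (ZMod 2)) with hK
  set g : K := MonoidAlgebra.of ℂ (Multiplicative (ZMod 2)) (Multiplicative.ofAdd 1) with hgdef
  have hg2 : g * g = 1 := by
    rw [hgdef, ← map_mul]
    have : (Multiplicative.ofAdd (1 : ZMod 2)) * (Multiplicative.ofAdd 1) = 1 := by decide
    rw [this, map_one]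
  -- The coaction as an algebra homomorphism
  set ρ : A →ₐ[ℂ] A ⊗[ℂ] K :=
    (Algebra.TensorProduct.map (AlgHom.id ℂ A) p).comp (Bialgebra.comulAlgHom ℂ A) with hρdef
  have hρ_apply : ∀ a : A,
      ρ a = (TensorProduct.map LinearMap.id p.toLinearMap) (Coalgebra.comul a) := by
    intro a
    have key : ∀ x : A ⊗[ℂ] A,
        (Algebra.TensorProduct.map (AlgHom.id ℂ A) p) x
          = (TensorProduct.map LinearMap.id p.toLinearMap) x := by
      intro x
      induction x using TensorProduct.induction_on with
      | zero => simp
      | tmul a b => simp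
      | add x y hx hy => simp [hx, hy]
    simpa [hρdef, Bialgebra.comulAlgHom_apply] using key (Coalgebra.comul a)
  have hρu : ∀ i j, ρ (u i j) = u i j ⊗ₜ[ℂ] g := by
    intro i j
    rw [hρ_apply, hcomul, map_sum]
    have : ∀ k : Fin n, (TensorProduct.map LinearMap.id p.toLinearMap) (u i k ⊗ₜ[ℂ] u k j)
        = if k = j then u i j ⊗ₜ[ℂ] g else 0 := by
      intro k
      rw [TensorProduct.map_tmul]
      simp only [LinearMap.id_coe, id_eq, AlgHom.toLinearMap_apply, hp k j]
      split_ifs with h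
      · subst h; rfl
      · exact TensorProduct.tmul_zero _ _
    rw [Finset.sum_congr rfl fun k _ => this k]
    simp
  -- The subalgebra PA and the submodule PA·u
  set PA := Algebra.adjoin ℂ {x : A | ∃ i j k l, x = u i j * u k l} with hPAdef
  set PAu : Submodule ℂ A :=
    Submodule.span ℂ {x : A | ∃ c ∈ (PA : Set A), ∃ i j, x = c * u i j} with hPAudef
  -- basic closure lemmas
  have hPA_mul_PAu : ∀ c ∈ PA, ∀ x ∈ PAu, c * x ∈ PAu := by
    intro c hc x hx
    induction hx using Submodule.span_induction with
    | mem y hy =>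
      obtain ⟨d, hd, i, j, rfl⟩ := hy
      rw [← mul_assoc]
      exact Submodule.subset_span ⟨c * d, mul_mem hc hd, i, j, rfl⟩
    | zero => simpa using Submodule.zero_mem PAu
    | add y z _ _ hy hz => rw [mul_add]; exact add_mem hy hz
    | smul a y _ hy => rw [mul_smul_comm]; exact Submodule.smul_mem _ _ hy
  have hu_mul_PA : ∀ c ∈ PA, ∀ i j, u i j * c ∈ PAu := by
    intro c hc
    induction hc using Algebra.adjoin_induction with
    | mem x hx =>
      obtain ⟨i', j', k', l', rfl⟩ := hx
      intro i j
      rw [← mul_assoc]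
      refine Submodule.subset_span ⟨u i j * u i' j', ?_, k', l', rfl⟩
      exact Algebra.subset_adjoin ⟨i, j, i', j', rfl⟩
    | algebraMap r =>
      intro i j
      rw [← Algebra.commutes r (u i j), Algebra.smul_def r (u i j) |>.symm]
      refine Submodule.smul_mem _ _ ?_
      refine Submodule.subset_span ⟨1, one_mem PA, i, j, (one_mul _).symm⟩
    | add x y hx hy ihx ihy =>
      intro i j
      rw [mul_add]; exact add_mem (ihx i j) (ihy i j)
    | mul x y hx hy ihx ihy =>
      intro i j
      rw [← mul_assoc]
      -- u i j * x ∈ PAu, and right-multiplication by y preserves PAu given ihy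
      have key : ∀ z ∈ PAu, z * y ∈ PAu := by
        intro z hz
        induction hz using Submodule.span_induction with
        | mem w hw =>
          obtain ⟨d, hd, i', j', rfl⟩ := hw
          rw [mul_assoc]
          exact hPA_mul_PAu d hd _ (ihy i' j')
        | zero => simpa using Submodule.zero_mem PAu
        | add w v _ _ hw hv => rw [add_mul]; exact add_mem hw hv
        | smul a w _ hw => rw [smul_mul_assoc]; exact Submodule.smul_mem _ _ hw
      exact key _ (ihx i j)
  have hPAu_mul_PA : ∀ x ∈ PAu, ∀ c ∈ PA, x * c ∈ PAu := by
    intro x hx c hc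
    induction hx using Submodule.span_induction with
    | mem y hy =>
      obtain ⟨d, hd, i, j, rfl⟩ := hy
      rw [mul_assoc]
      exact hPA_mul_PAu d hd _ (hu_mul_PA c hc i j)
    | zero => simpa using Submodule.zero_mem PAu
    | add y z _ _ hy hz => rw [add_mul]; exact add_mem hy hz
    | smul a y _ hy => rw [smul_mul_assoc]; exact Submodule.smul_mem _ _ hy
  have hPAu_mul_u : ∀ x ∈ PAu, ∀ i j, x * u i j ∈ PA := by
    intro x hx
    induction hx using Submodule.span_induction with
    | mem y hy =>
      obtain ⟨d, hd, i', j', rfl⟩ := hy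
      intro i j
      rw [mul_assoc]
      exact mul_mem hd (Algebra.subset_adjoin ⟨i', j', i, j, rfl⟩)
    | zero => intro i j; simpa using Subalgebra.zero_mem PA
    | add y z _ _ hy hz => intro i j; rw [add_mul]; exact add_mem (hy i j) (hz i j)
    | smul a y _ hy => intro i j; rw [smul_mul_assoc]; exact Subalgebra.smul_mem PA (hy i j) a
  have hPAu_mul_PAu : ∀ x ∈ PAu, ∀ y ∈ PAu, x * y ∈ PA := by
    intro x hx y hy
    induction hy using Submodule.span_induction with
    | mem z hz =>
      obtain ⟨d, hd, i, j, rfl⟩ := hz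
      rw [← mul_assoc]
      exact hPAu_mul_u _ (hPAu_mul_PA x hx d hd) i j
    | zero => simpa using Subalgebra.zero_mem PA
    | add z w _ _ hz hw => rw [mul_add]; exact add_mem hz hw
    | smul a z _ hz => rw [mul_smul_comm]; exact Subalgebra.smul_mem PA hz a
  -- even and odd parts
  set E : Submodule ℂ A :=
    (LinearMap.eqLocus ρ.toLinearMap ((TensorProduct.mk ℂ A K).flip 1))
      ⊓ Subalgebra.toSubmodule PA with hEdef
  set O : Submodule ℂ A :=
    (LinearMap.eqLocus ρ.toLinearMap ((TensorProduct.mk ℂ A K).flip g)) ⊓ PAu with hOdef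
  have hE_mem : ∀ x, x ∈ E ↔ (ρ x = x ⊗ₜ[ℂ] 1 ∧ x ∈ PA) := fun x => Iff.rfl
  have hO_mem : ∀ x, x ∈ O ↔ (ρ x = x ⊗ₜ[ℂ] g ∧ x ∈ PAu) := fun x => Iff.rfl
  have hEE : ∀ x ∈ E, ∀ y ∈ E, x * y ∈ E := by
    intro x hx y hy
    obtain ⟨hx1, hx2⟩ := hx
    obtain ⟨hy1, hy2⟩ := hy
    have hx1' : ρ x = x ⊗ₜ[ℂ] 1 := hx1
    have hy1' : ρ y = y ⊗ₜ[ℂ] 1 := hy1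
    have hx2' : x ∈ PA := hx2
    have hy2' : y ∈ PA := hy2
    refine ⟨?_, ?_⟩
    · show ρ (x * y) = (x * y) ⊗ₜ[ℂ] 1
      rw [map_mul, hx1', hy1', Algebra.TensorProduct.tmul_mul_tmul, one_mul]
    · show x * y ∈ PA
      exact mul_mem hx2' hy2'
  have hEO : ∀ x ∈ E, ∀ y ∈ O, x * y ∈ O := by
    intro x hx y hy
    obtain ⟨hx1, hx2⟩ := hx
    obtain ⟨hy1, hy2⟩ := hy
    have hx1' : ρ x = x ⊗ₜ[ℂ] 1 := hx1
    have hy1' : ρ y = y ⊗ₜ[ℂ] g := hy1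
    refine ⟨?_, hPA_mul_PAu x hx2 y hy2⟩
    show ρ (x * y) = (x * y) ⊗ₜ[ℂ] g
    rw [map_mul, hx1', hy1', Algebra.TensorProduct.tmul_mul_tmul, one_mul]
  have hOE : ∀ x ∈ O, ∀ y ∈ E, x * y ∈ O := by
    intro x hx y hy
    obtain ⟨hx1, hx2⟩ := hx
    obtain ⟨hy1, hy2⟩ := hy
    have hx1' : ρ x = x ⊗ₜ[ℂ] g := hx1
    have hy1' : ρ y = y ⊗ₜ[ℂ] 1 := hy1
    refine ⟨?_, hPAu_mul_PA x hx2 y hy2⟩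
    show ρ (x * y) = (x * y) ⊗ₜ[ℂ] g
    rw [map_mul, hx1', hy1', Algebra.TensorProduct.tmul_mul_tmul, mul_one]
  have hOO : ∀ x ∈ O, ∀ y ∈ O, x * y ∈ E := by
    intro x hx y hy
    obtain ⟨hx1, hx2⟩ := hx
    obtain ⟨hy1, hy2⟩ := hy
    have hx1' : ρ x = x ⊗ₜ[ℂ] g := hx1
    have hy1' : ρ y = y ⊗ₜ[ℂ] g := hy1
    refine ⟨?_, hPAu_mul_PAu x hx2 y hy2⟩
    show ρ (x * y) = (x * y) ⊗ₜ[ℂ] 1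
    rw [map_mul, hx1', hy1', Algebra.TensorProduct.tmul_mul_tmul, hg2]
  -- every element decomposes as even + odd
  have htop : (⊤ : Submodule ℂ A) ≤ E ⊔ O := by
    have : Subalgebra.toSubmodule (Algebra.adjoin ℂ {x : A | ∃ i j, x = u i j}) ≤ E ⊔ O := by
      rw [Algebra.adjoin_eq_span, Submodule.span_le]
      intro w hw
      have hw' : w ∈ Submonoid.closure {x : A | ∃ i j, x = u i j} := hw
      refine Submonoid.closure_induction (motive := fun x _ => x ∈ E ⊔ O) ?_ ?_ ?_ hw'
      · intro x hx
        obtain ⟨i, j, rfl⟩ := hx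
        refine Submodule.mem_sup_right ⟨hρu i j, ?_⟩
        exact Submodule.subset_span ⟨1, one_mem PA, i, j, (one_mul _).symm⟩
      · refine Submodule.mem_sup_left ⟨?_, one_mem PA⟩
        show ρ 1 = (1 : A) ⊗ₜ[ℂ] 1
        rw [map_one]; rfl
      · intro x y hx hy ihx ihy
        obtain ⟨ex, hex, ox, hox, hxeq⟩ := Submodule.mem_sup.mp ihx
        obtain ⟨ey, hey, oy, hoy, hyeq⟩ := Submodule.mem_sup.mp ihy
        have hxy : x * y = (ex * ey + ox * oy) + (ex * oy + ox * ey) := by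
          rw [← hxeq, ← hyeq]; simp only [add_mul, mul_add]; abel
        rw [hxy]
        exact add_mem
          (Submodule.mem_sup_left (add_mem (hEE _ hex _ hey) (hOO _ hox _ hoy)))
          (Submodule.mem_sup_right (add_mem (hEO _ hex _ hoy) (hOE _ hox _ hey)))
    rw [hgen] at this
    exact this
  -- the functional extracting the coefficient of g
  set φ : K →ₗ[ℂ] ℂ := Finsupp.lapply (Multiplicative.ofAdd (1 : ZMod 2)) ∘ₗ
    (MonoidAlgebra.coeffLinearEquiv ℂ).toLinearMap with hφdef
  have hφg : φ g = 1 := by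
    show (Finsupp.single (Multiplicative.ofAdd (1 : ZMod 2)) (1:ℂ))
      (Multiplicative.ofAdd (1 : ZMod 2)) = 1
    simp
  have hφ1 : φ (1 : K) = 0 := by
    show (Finsupp.single (1 : Multiplicative (ZMod 2)) (1:ℂ))
      (Multiplicative.ofAdd (1 : ZMod 2)) = 0
    rw [Finsupp.single_eq_of_ne]
    decide
  set L : A ⊗[ℂ] K →ₗ[ℂ] A :=
    (TensorProduct.rid ℂ A).toLinearMap ∘ₗ TensorProduct.map LinearMap.id φ with hLdef
  have hL : ∀ (a : A) (k : K), L (a ⊗ₜ[ℂ] k) = φ k • a := by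
    intro a k; simp [hLdef]
  -- now prove the two inclusions
  apply Set.Subset.antisymm
  · -- coinvariants ⊆ PA
    intro a ha
    have ha' : ρ a = a ⊗ₜ[ℂ] 1 := by rw [hρ_apply]; exact ha
    obtain ⟨e, he, o, ho, rfl⟩ := Submodule.mem_sup.mp (htop (Submodule.mem_top (x := a)))
    obtain ⟨he1, he2⟩ := he
    obtain ⟨ho1, ho2⟩ := ho
    have he1' : ρ e = e ⊗ₜ[ℂ] 1 := he1
    have ho1' : ρ o = o ⊗ₜ[ℂ] g := ho1
    have heq2 : o ⊗ₜ[ℂ] g = o ⊗ₜ[ℂ] (1:K) := by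
      have h := ha'
      rw [map_add, he1', ho1', TensorProduct.add_tmul] at h
      exact add_left_cancel h
    have : o = 0 := by
      have := congrArg L heq2
      rw [hL, hL, hφg, hφ1, one_smul, zero_smul] at this
      exact this
    rw [this, add_zero]
    exact he2
  · -- PA ⊆ coinvariants
    intro a ha
    show (TensorProduct.map LinearMap.id p.toLinearMap) (Coalgebra.comul a) = a ⊗ₜ[ℂ] 1
    rw [← hρ_apply]
    have ha' : a ∈ PA := ha
    refine Algebra.adjoin_induction (p := fun x _ => ρ x = x ⊗ₜ[ℂ] (1:K)) ?_ ?_ ?_ ?_ ha'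
    · intro x hx
      obtain ⟨i, j, k, l, rfl⟩ := hx
      rw [map_mul, hρu, hρu, Algebra.TensorProduct.tmul_mul_tmul, hg2]
    · intro r
      rw [AlgHom.commutes, Algebra.TensorProduct.algebraMap_apply]
    · intro x y hx hy ihx ihy
      rw [map_add, ihx, ihy, TensorProduct.add_tmul]
    · intro x y hx hy ihx ihy
      rw [map_mul, ihx, ihy, Algebra.TensorProduct.tmul_mul_tmul, one_mul]
end
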